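/- arXiv:2204.10649 — 4 statements merged into one kernel-verified Lean document; each statement's English description precedes it below -/
import Mathlib

section
/- Let f be a probability density on [0,∞) of gamma type: f(x)/(C(x) x^α e^{-βx}) → 1 as x → ∞, where β > 0, α ∈ ℝ, and C is slowly varying, positive and locally bounded. Then the survival function F̄(x) = ∫_x^∞ f satisfies F̄(x+k)/F̄(x) → e^{-βk} as x → ∞, for every k ∈ ℝ. -/
open Filter Real MeasureTheory Set

lemma uct_core
    (L L₀ : ℝ → ℝ) (hL₀ : Measurable L₀)
    (hae : ∀ᵐ t : ℝ, L t = L₀ t)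
    (hSV : ∀ s : ℝ, s ∈ Set.Icc (1:ℝ) 2 →
      Tendsto (fun u => L (u * s) - L u) atTop (nhds 0))
    (k ε : ℝ) (hε : 0 < ε) :
    ∃ X : ℝ, ∀ᵐ t : ℝ, X ≤ t → |L (t + k) - L t| ≤ ε := by
  by_contra hcon
  push_neg at hcon
  -- translation of the null set
  have haeK : ∀ᵐ t : ℝ, L (t + k) = L₀ (t + k) := by
    have h0 : volume {t : ℝ | ¬ L t = L₀ t} = 0 := ae_iff.mp hae
    have : volume ((fun t : ℝ => t + k) ⁻¹' {t : ℝ | ¬ L t = L₀ t}) = 0 := by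
      rw [measure_preimage_add_right]; exact h0
    exact ae_iff.mpr this
  have key : ∀ X : ℝ, ∃ t, X ≤ t ∧ ε < |L₀ (t + k) - L₀ t| ∧ L t = L₀ t ∧
      L (t + k) = L₀ (t + k) := by
    intro X
    have h1 := hcon X
    have h2 := h1.and_eventually (hae.and haeK)
    obtain ⟨t, ht1, ht2, ht3⟩ := h2.exists
    refine ⟨t, ht1.1, ?_, ht2, ht3⟩
    rw [← ht2, ← ht3]; exact ht1.2
  set M : ℝ := |k| + 1 with hM
  set a : ℕ → ℝ := fun n => (key ((n : ℝ) + M)).choose with ha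
  have haspec : ∀ n : ℕ, (n : ℝ) + M ≤ a n ∧ ε < |L₀ (a n + k) - L₀ (a n)| ∧
      L (a n) = L₀ (a n) ∧ L (a n + k) = L₀ (a n + k) := fun n => (key ((n : ℝ) + M)).choose_spec
  set b : ℕ → ℝ := fun n => a n + k with hb
  have han : ∀ n : ℕ, (n : ℝ) + 1 ≤ a n := by
    intro n
    have := (haspec n).1
    have : (n:ℝ) + (|k| + 1) ≤ a n := this
    have h3 : (0:ℝ) ≤ |k| := abs_nonneg k
    linarith
  have hbn : ∀ n : ℕ, (n : ℝ) + 1 ≤ b n := by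
    intro n
    have := (haspec n).1
    have h3 : -|k| ≤ k := neg_abs_le k
    simp only [hb]
    have : (n:ℝ) + (|k| + 1) ≤ a n := this
    linarith
  have ha_pos : ∀ n, 0 < a n := fun n => lt_of_lt_of_le (by positivity) (han n)
  have hb_pos : ∀ n, 0 < b n := fun n => lt_of_lt_of_le (by positivity) (hbn n)
  have tendsto_a : Tendsto a atTop atTop :=
    tendsto_atTop_mono han (tendsto_atTop_add_const_right _ 1 tendsto_natCast_atTop_atTop)
  have tendsto_b : Tendsto b atTop atTop :=
    tendsto_atTop_mono hbn (tendsto_atTop_add_const_right _ 1 tendsto_natCast_atTop_atTop)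
  -- bad sets
  set A : ℕ → Set ℝ := fun m => {s | s ∈ Set.Icc (1:ℝ) 2 ∧ ε/2 ≤ |L₀ (b m * s) - L₀ (b m)|}
    with hA
  set B : ℕ → Set ℝ := fun m => {s | s ∈ Set.Icc (1:ℝ) 2 ∧ ε/2 ≤ |L₀ (a m * s) - L₀ (a m)|}
    with hB
  have measA : ∀ m, MeasurableSet (A m) := by
    intro m
    have : A m = Set.Icc 1 2 ∩ {s : ℝ | ε/2 ≤ |L₀ (b m * s) - L₀ (b m)|} := rfl
    rw [this]
    exact measurableSet_Icc.inter (measurableSet_le measurable_const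
      (((hL₀.comp (measurable_id.const_mul (b m))).sub measurable_const).abs))
  have measB : ∀ m, MeasurableSet (B m) := by
    intro m
    have : B m = Set.Icc 1 2 ∩ {s : ℝ | ε/2 ≤ |L₀ (a m * s) - L₀ (a m)|} := rfl
    rw [this]
    exact measurableSet_Icc.inter (measurableSet_le measurable_const
      (((hL₀.comp (measurable_id.const_mul (a m))).sub measurable_const).abs))
  -- generic property: eventually not in A m / B m
  have hgen : ∀ (c : ℕ → ℝ), (∀ n, 0 < c n) → Tendsto c atTop atTop →
      (∀ n, L (c n) = L₀ (c n)) →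
      ∀ᵐ s : ℝ, s ∈ Set.Icc (1:ℝ) 2 →
        ∀ᶠ m in atTop, ¬ (ε/2 ≤ |L₀ (c m * s) - L₀ (c m)|) := by
    intro c hc htc heq
    have hZ : ∀ᵐ s : ℝ, ∀ m : ℕ, L (c m * s) = L₀ (c m * s) := by
      rw [ae_all_iff]
      intro m
      have h0 : volume {t : ℝ | ¬ L t = L₀ t} = 0 := ae_iff.mp hae
      have : volume ((fun s : ℝ => c m * s) ⁻¹' {t : ℝ | ¬ L t = L₀ t}) = 0 := by
        rw [Real.volume_preimage_mul_left (ne_of_gt (hc m))]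
        rw [h0, mul_zero]
      exact ae_iff.mpr this
    filter_upwards [hZ] with s hs hs12
    have h0 : Tendsto (fun m => L (c m * s) - L (c m)) atTop (nhds 0) :=
      (hSV s hs12).comp htc
    have h0' : Tendsto (fun m => L₀ (c m * s) - L₀ (c m)) atTop (nhds 0) := by
      refine h0.congr fun m => ?_
      rw [hs m, heq m]
    have h1 : ∀ᶠ m in atTop, |L₀ (c m * s) - L₀ (c m)| < ε/2 := by
      have h2 := Metric.tendsto_nhds.mp h0' (ε/2) (by positivity)
      simpa [Real.dist_eq] using h2
    exact h1.mono fun m hm => not_le.mpr hm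
  -- the unions
  set UA : ℕ → Set ℝ := fun n => ⋃ m, ⋃ (_ : n ≤ m), A m with hUA
  set UB : ℕ → Set ℝ := fun n => ⋃ m, ⋃ (_ : n ≤ m), B m with hUB
  have measUA : ∀ n, MeasurableSet (UA n) := fun n =>
    MeasurableSet.iUnion fun m => MeasurableSet.iUnion fun _ => measA m
  have measUB : ∀ n, MeasurableSet (UB n) := fun n =>
    MeasurableSet.iUnion fun m => MeasurableSet.iUnion fun _ => measB m
  have antiUA : Antitone UA := by
    intro n n' h
    exact Set.iUnion₂_subset fun m hm => Set.subset_iUnion₂ (s := fun m _ => A m) m (le_trans h hm)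
  have antiUB : Antitone UB := by
    intro n n' h
    exact Set.iUnion₂_subset fun m hm => Set.subset_iUnion₂ (s := fun m _ => B m) m (le_trans h hm)
  have hsub : ∀ (S : ℕ → Set ℝ), (∀ m, S m ⊆ Set.Icc (1:ℝ) 2) →
      (⋃ m, ⋃ (_ : 0 ≤ m), S m) ⊆ Set.Icc (1:ℝ) 2 :=
    fun S hS => Set.iUnion₂_subset fun m _ => hS m
  have hAIcc : ∀ m, A m ⊆ Set.Icc (1:ℝ) 2 := fun m s hs => hs.1
  have hBIcc : ∀ m, B m ⊆ Set.Icc (1:ℝ) 2 := fun m s hs => hs.1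
  have hfinA : volume (UA 0) ≠ ⊤ := by
    refine ne_of_lt (lt_of_le_of_lt (measure_mono (hsub A hAIcc)) ?_)
    rw [Real.volume_Icc]; exact ENNReal.ofReal_lt_top
  have hfinB : volume (UB 0) ≠ ⊤ := by
    refine ne_of_lt (lt_of_le_of_lt (measure_mono (hsub B hBIcc)) ?_)
    rw [Real.volume_Icc]; exact ENNReal.ofReal_lt_top
  -- limsup is null
  have hnull : ∀ (S : ℕ → Set ℝ), (∀ m, S m ⊆ Set.Icc (1:ℝ) 2) →
      (∀ᵐ s : ℝ, s ∈ Set.Icc (1:ℝ) 2 → ∀ᶠ m in atTop, s ∉ S m) →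
      volume (⋂ n, ⋃ m, ⋃ (_ : n ≤ m), S m) = 0 := by
    intro S hSIcc hev
    refine measure_mono_null ?_ (ae_iff.mp hev)
    intro s hsmem
    simp only [Set.mem_iInter] at hsmem
    simp only [Set.mem_setOf_eq]
    intro hP
    have hs12 : s ∈ Set.Icc (1:ℝ) 2 := by
      obtain ⟨m, _, hm⟩ := Set.mem_iUnion₂.mp (hsmem 0)
      exact hSIcc m hm
    obtain ⟨n, hn⟩ := eventually_atTop.mp (hP hs12)
    obtain ⟨m, hm1, hm2⟩ := Set.mem_iUnion₂.mp (hsmem n)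
    exact hn m hm1 hm2
  have hUA0 : volume (⋂ n, UA n) = 0 := by
    apply hnull A hAIcc
    have := hgen b hb_pos tendsto_b (fun n => (haspec n).2.2.2)
    filter_upwards [this] with s hs hs12
    exact (hs hs12).mono fun m hm hmem => hm hmem.2
  have hUB0 : volume (⋂ n, UB n) = 0 := by
    apply hnull B hBIcc
    have := hgen a ha_pos tendsto_a (fun n => (haspec n).2.2.1)
    filter_upwards [this] with s hs hs12
    exact (hs hs12).mono fun m hm hmem => hm hmem.2
  have hlimA : Tendsto (fun n => volume (UA n)) atTop (nhds 0) := by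
    have := tendsto_measure_iInter_atTop (fun n => (measUA n).nullMeasurableSet) antiUA ⟨0, hfinA⟩
    rw [hUA0] at this
    exact this
  have hlimB : Tendsto (fun n => volume (UB n)) atTop (nhds 0) := by
    have := tendsto_measure_iInter_atTop (fun n => (measUB n).nullMeasurableSet) antiUB ⟨0, hfinB⟩
    rw [hUB0] at this
    exact this
  -- choose N
  have hevA : ∀ᶠ n in atTop, volume (UA n) < ENNReal.ofReal (1/8) :=
    hlimA.eventually_lt_const (ENNReal.ofReal_pos.mpr (by norm_num))
  have hevB : ∀ᶠ n in atTop, volume (UB n) < ENNReal.ofReal (1/16) :=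
    hlimB.eventually_lt_const (ENNReal.ofReal_pos.mpr (by norm_num))
  have hevk : ∀ᶠ n : ℕ in atTop, 10 * |k| ≤ (n : ℝ) :=
    tendsto_natCast_atTop_atTop.eventually_ge_atTop _
  obtain ⟨N, hN1, hN2, hN3⟩ := (hevA.and (hevB.and hevk)).exists
  -- the ratio r
  set r : ℝ := b N / a N with hr
  have haN : 0 < a N := ha_pos N
  have hrval : r - 1 = k / a N := by
    rw [hr, hb]
    field_simp
    ring
  have hrbound : |r - 1| ≤ 1/10 := by
    rw [hrval, abs_div, abs_of_pos haN]
    have h1 : 10 * |k| ≤ a N := by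
      have h2 := han N
      linarith [hN3]
    rw [div_le_iff₀ haN]
    have h3 : 0 ≤ |k| := abs_nonneg k
    linarith
  have hr0 : (0:ℝ) < r := by
    have := abs_le.mp hrbound
    linarith [this.1]
  have hr9 : (9:ℝ)/10 ≤ r := by have := abs_le.mp hrbound; linarith [this.1]
  have hr11 : r ≤ (11:ℝ)/10 := by have := abs_le.mp hrbound; linarith [this.2]
  -- the preimage set
  set P : Set ℝ := (fun s => r * s) ⁻¹' (B N) with hP
  have hPvol : volume P ≤ ENNReal.ofReal 2 * volume (B N) := by
    rw [hP, Real.volume_preimage_mul_left (ne_of_gt hr0)]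
    have h2 : |r⁻¹| ≤ 2 := by
      rw [abs_of_pos (inv_pos.mpr hr0)]
      have h3 : ((1:ℝ)/2)⁻¹ = 2 := by norm_num
      calc r⁻¹ ≤ ((1:ℝ)/2)⁻¹ := by
            apply inv_anti₀ (by norm_num)
            linarith
        _ = 2 := h3
    exact mul_le_mul_left (ENNReal.ofReal_le_ofReal h2) _
  -- find a good point s
  have hANvol : volume (A N) < ENNReal.ofReal (1/8) :=
    lt_of_le_of_lt (measure_mono (Set.subset_iUnion₂ (s := fun m _ => A m) N le_rfl)) hN1
  have hBNvol : volume (B N) < ENNReal.ofReal (1/16) :=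
    lt_of_le_of_lt (measure_mono (Set.subset_iUnion₂ (s := fun m _ => B m) N le_rfl)) hN2
  have hPvol' : volume P ≤ ENNReal.ofReal (1/8) := by
    refine le_trans hPvol ?_
    calc ENNReal.ofReal 2 * volume (B N) ≤ ENNReal.ofReal 2 * ENNReal.ofReal (1/16) :=
          mul_le_mul' le_rfl hBNvol.le
      _ = ENNReal.ofReal (1/8) := by
          rw [← ENNReal.ofReal_mul (by norm_num : (0:ℝ) ≤ 2)]
          norm_num
  have hgood : ∃ s : ℝ, s ∈ Set.Icc ((6:ℝ)/5) ((9:ℝ)/5) ∧ s ∉ A N ∧ s ∉ P := by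
    by_contra hg
    push_neg at hg
    have hsub2 : Set.Icc ((6:ℝ)/5) ((9:ℝ)/5) ⊆ A N ∪ P := by
      intro s hs
      rcases Classical.em (s ∈ A N) with h | h
      · exact Or.inl h
      · exact Or.inr (hg s hs h)
    have hle : volume (Set.Icc ((6:ℝ)/5) ((9:ℝ)/5)) ≤ volume (A N) + volume P :=
      le_trans (measure_mono hsub2) (measure_union_le _ _)
    have hlt : volume (A N) + volume P ≤ ENNReal.ofReal (1/8) + ENNReal.ofReal (1/8) :=
      add_le_add hANvol.le hPvol'
    rw [← ENNReal.ofReal_add (by norm_num) (by norm_num)] at hlt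
    rw [Real.volume_Icc] at hle
    have hfin : ENNReal.ofReal ((9:ℝ)/5 - (6:ℝ)/5) ≤ ENNReal.ofReal (1/8 + 1/8) :=
      le_trans hle hlt
    rw [ENNReal.ofReal_le_ofReal_iff (by norm_num)] at hfin
    norm_num at hfin
  obtain ⟨s, hsI, hsA, hsP⟩ := hgood
  have hs1 : (6:ℝ)/5 ≤ s := hsI.1
  have hs2 : s ≤ (9:ℝ)/5 := hsI.2
  have hs12 : s ∈ Set.Icc (1:ℝ) 2 := ⟨by linarith, by linarith⟩
  have hrs12 : r * s ∈ Set.Icc (1:ℝ) 2 := by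
    constructor
    · nlinarith
    · nlinarith
  have hAbound : |L₀ (b N * s) - L₀ (b N)| < ε/2 := by
    by_contra hc
    exact hsA ⟨hs12, not_lt.mp hc⟩
  have hBbound : |L₀ (a N * (r * s)) - L₀ (a N)| < ε/2 := by
    by_contra hc
    exact hsP ⟨hrs12, not_lt.mp hc⟩
  have heqpt : a N * (r * s) = b N * s := by
    rw [hr]
    field_simp
  rw [heqpt] at hBbound
  have htri : |L₀ (b N) - L₀ (a N)| ≤ |L₀ (b N * s) - L₀ (b N)| + |L₀ (b N * s) - L₀ (a N)| := by
    have h1 : |L₀ (b N) - L₀ (a N)| ≤ |L₀ (b N) - L₀ (b N * s)| + |L₀ (b N * s) - L₀ (a N)| :=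
      abs_sub_le _ _ _
    rw [abs_sub_comm (L₀ (b N)) (L₀ (b N * s))] at h1
    exact h1
  have hkey := (haspec N).2.1
  have : ε < ε := by
    calc ε < |L₀ (a N + k) - L₀ (a N)| := hkey
      _ = |L₀ (b N) - L₀ (a N)| := by rw [hb]
      _ ≤ _ := htri
      _ < ε/2 + ε/2 := by linarith
      _ = ε := by ring
  exact lt_irrefl _ this
/-- A gamma-type density has an exponential tail: the survival function satisfies
`F̄(x+k)/F̄(x) → exp (-β k)` for every `k : ℝ`. -/
theorem gammaType_exponential_tail
    (f C : ℝ → ℝ) (α β : ℝ) (hβ : 0 < β)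
    (hf_nonneg : ∀ x, 0 ≤ f x)
    (hf_supp : ∀ x < 0, f x = 0)
    (hf_int : Integrable f)
    (hf_prob : ∫ x, f x = 1)
    (hC_pos : ∀ x, 0 < C x)
    (hC_locbdd : ∀ r : ℝ, ∃ M : ℝ, ∀ x ∈ Set.Icc (0:ℝ) r, |C x| ≤ M)
    (hC_SV : ∀ x : ℝ, 0 < x → Tendsto (fun t => C (t * x) / C t) atTop (nhds 1))
    (hGamma : Tendsto (fun x => f x / (C x * x ^ α * Real.exp (-β * x))) atTop (nhds 1)) :
    ∀ k : ℝ,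
      Tendsto (fun x => (∫ t in Set.Ioi (x + k), f t) / (∫ t in Set.Ioi x, f t))
        atTop (nhds (Real.exp (-β * k))) := by
  intro k
  set D : ℝ → ℝ := fun t => C t * t ^ α * Real.exp (-β * t) with hD
  have hD_pos : ∀ t : ℝ, 0 < t → 0 < D t := by
    intro t ht
    have h1 : (0:ℝ) < t ^ α := Real.rpow_pos_of_pos ht α
    have h2 := hC_pos t
    positivity
  set g : ℝ → ℝ := fun t => f t / D t with hg
  have hgT : Tendsto g atTop (nhds 1) := hGamma
  have hgev : ∀ᶠ t : ℝ in atTop, 1/2 < g t ∧ 1 ≤ t :=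
    (hgT.eventually (eventually_gt_nhds (by norm_num : (1:ℝ)/2 < 1))).and
      (eventually_ge_atTop 1)
  obtain ⟨T₀, hT₀⟩ := eventually_atTop.mp hgev
  have hT₀1 : 1 ≤ T₀ := (hT₀ T₀ le_rfl).2
  have hfD : ∀ t : ℝ, T₀ ≤ t → f t = g t * D t := by
    intro t ht
    have h1 : D t ≠ 0 := ne_of_gt (hD_pos t (lt_of_lt_of_le one_pos (hT₀ t ht).2))
    rw [hg]
    field_simp
  have hfpos : ∀ t : ℝ, T₀ ≤ t → 0 < f t := by
    intro t ht
    rw [hfD t ht]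
    have h1 : 0 < g t := lt_trans (by norm_num) (hT₀ t ht).1
    exact mul_pos h1 (hD_pos t (lt_of_lt_of_le one_pos (hT₀ t ht).2))
  -- positivity of the survival function
  have hFbar_pos : ∀ x : ℝ, 0 < ∫ t in Set.Ioi x, f t := by
    intro x
    have hnn : 0 ≤ᵐ[volume.restrict (Set.Ioi (max x T₀))] f :=
      Filter.Eventually.of_forall hf_nonneg
    have h1 : (0:ℝ) < ∫ t in Set.Ioi (max x T₀), f t := by
      rw [setIntegral_pos_iff_support_of_nonneg_ae hnn hf_int.integrableOn]
      have hsub : Set.Ioi (max x T₀) ⊆ Function.support f ∩ Set.Ioi (max x T₀) := by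
        intro t ht
        exact ⟨ne_of_gt (hfpos t (le_of_lt (lt_of_le_of_lt (le_max_right x T₀) ht))), ht⟩
      calc (0:ENNReal) < ⊤ := by simp
        _ = volume (Set.Ioi (max x T₀)) := (Real.volume_Ioi).symm
        _ ≤ volume (Function.support f ∩ Set.Ioi (max x T₀)) := measure_mono hsub
    have h2 : (∫ t in Set.Ioi (max x T₀), f t) ≤ ∫ t in Set.Ioi x, f t :=
      setIntegral_mono_set hf_int.integrableOn
        (Filter.Eventually.of_forall hf_nonneg)
        ((Set.Ioi_subset_Ioi (le_max_left x T₀)).eventuallyLE)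
    exact lt_of_lt_of_le h1 h2
  -- measurable representative and the log-scale functions
  set f₀ : ℝ → ℝ := hf_int.aestronglyMeasurable.mk f with hf₀def
  have hf₀meas : StronglyMeasurable f₀ := hf_int.aestronglyMeasurable.stronglyMeasurable_mk
  have hf₀ae : f =ᵐ[volume] f₀ := hf_int.aestronglyMeasurable.ae_eq_mk
  set L : ℝ → ℝ := fun t => Real.log (f t) - α * Real.log t + β * t with hL
  set L₀ : ℝ → ℝ := fun t => Real.log (f₀ t) - α * Real.log t + β * t with hL₀
  have hL₀meas : Measurable L₀ := by
    apply Measurable.add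
    · exact (Real.measurable_log.comp hf₀meas.measurable).sub
        (Real.measurable_log.const_mul α)
    · exact measurable_id.const_mul β
  have haeL : ∀ᵐ t : ℝ, L t = L₀ t := by
    filter_upwards [hf₀ae] with t ht
    rw [hL, hL₀]
    simp only [ht]
  -- the formula for L on [T₀, ∞)
  have hLform : ∀ t : ℝ, T₀ ≤ t → L t = Real.log (g t) + Real.log (C t) := by
    intro t ht
    have ht1 : (1:ℝ) ≤ t := (hT₀ t ht).2
    have ht0 : (0:ℝ) < t := lt_of_lt_of_le one_pos ht1
    have hgt : g t ≠ 0 := ne_of_gt (lt_trans (by norm_num) (hT₀ t ht).1)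
    have hCt : C t ≠ 0 := ne_of_gt (hC_pos t)
    have hrp : t ^ α ≠ 0 := ne_of_gt (Real.rpow_pos_of_pos ht0 α)
    have hex : Real.exp (-β * t) ≠ 0 := ne_of_gt (Real.exp_pos _)
    have h1 : Real.log (f t) = Real.log (g t) + Real.log (C t) + α * Real.log t + (-β * t) := by
      rw [hfD t ht, hD]
      rw [Real.log_mul hgt (by positivity), Real.log_mul (mul_ne_zero hCt hrp) hex,
        Real.log_mul hCt hrp, Real.log_rpow ht0, Real.log_exp]
      ring
    rw [hL]
    simp only [h1]
    ring
  -- slow variation of L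
  have hSVL : ∀ s : ℝ, s ∈ Set.Icc (1:ℝ) 2 →
      Tendsto (fun u => L (u * s) - L u) atTop (nhds 0) := by
    intro s hs
    have hs1 : (1:ℝ) ≤ s := hs.1
    have hs0 : (0:ℝ) < s := lt_of_lt_of_le one_pos hs1
    have hmul : Tendsto (fun u : ℝ => u * s) atTop atTop :=
      Tendsto.atTop_mul_const hs0 tendsto_id
    have hlog1 : Tendsto (fun u : ℝ => Real.log (g (u * s))) atTop (nhds 0) := by
      have h1 : Tendsto (fun u : ℝ => g (u * s)) atTop (nhds 1) := hgT.comp hmul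
      have h2 := (Real.continuousAt_log one_ne_zero).tendsto.comp h1
      rw [Real.log_one] at h2
      exact h2
    have hlog2 : Tendsto (fun u : ℝ => Real.log (g u)) atTop (nhds 0) := by
      have h2 := (Real.continuousAt_log one_ne_zero).tendsto.comp hgT
      rw [Real.log_one] at h2
      exact h2
    have hlogC : Tendsto (fun u : ℝ => Real.log (C (u * s)) - Real.log (C u))
        atTop (nhds 0) := by
      have h1 := (Real.continuousAt_log one_ne_zero).tendsto.comp (hC_SV s hs0)
      rw [Real.log_one] at h1
      refine h1.congr fun u => ?_
      exact Real.log_div (ne_of_gt (hC_pos _)) (ne_of_gt (hC_pos _))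
    have hsum := ((hlog1.sub hlog2).add hlogC)
    rw [show (0:ℝ) - 0 + 0 = 0 by ring] at hsum
    refine hsum.congr' ?_
    filter_upwards [eventually_ge_atTop T₀] with u hu
    have hu0 : (0:ℝ) ≤ u := le_trans (le_trans zero_le_one hT₀1) hu
    have hus : T₀ ≤ u * s := le_trans hu (le_mul_of_one_le_right hu0 hs1)
    rw [hLform u hu, hLform (u * s) hus]
    ring
  -- a.e. multiplicative bound on f(t+k)/f(t)
  have main_ae : ∀ ε1 : ℝ, 0 < ε1 → ∃ X : ℝ, ∀ᵐ t : ℝ, X ≤ t →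
      f (t + k) ≤ Real.exp (2*ε1) * Real.exp (-β * k) * f t ∧
      Real.exp (-(2*ε1)) * Real.exp (-β * k) * f t ≤ f (t + k) := by
    intro ε1 hε1
    obtain ⟨X₁, hX₁⟩ := uct_core L L₀ hL₀meas haeL hSVL k ε1 hε1
    -- deterministic power part
    have hdet : ∀ᶠ t : ℝ in atTop, |α * (Real.log (t + k) - Real.log t)| < ε1 := by
      have hq : Tendsto (fun t : ℝ => 1 + k / t) atTop (nhds 1) := by
        have h1 : Tendsto (fun t : ℝ => k / t) atTop (nhds 0) :=
          tendsto_const_nhds.div_atTop tendsto_id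
        have h2 := tendsto_const_nhds.add h1 (f := fun _ : ℝ => (1:ℝ))
        rw [add_zero] at h2
        exact h2
      have hlogq : Tendsto (fun t : ℝ => Real.log (1 + k / t)) atTop (nhds 0) := by
        have h2 := (Real.continuousAt_log one_ne_zero).tendsto.comp hq
        rw [Real.log_one] at h2
        exact h2
      have hql : Tendsto (fun t : ℝ => α * (Real.log (t + k) - Real.log t))
          atTop (nhds 0) := by
        have h3 : Tendsto (fun t : ℝ => α * Real.log (1 + k / t)) atTop (nhds 0) := by
          have h4 := hlogq.const_mul α
          rw [mul_zero] at h4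
          exact h4
        refine h3.congr' ?_
        filter_upwards [eventually_ge_atTop (|k| + 1)] with t ht
        have ht0 : (0:ℝ) < t := lt_of_lt_of_le (by positivity) ht
        have htk : (0:ℝ) < t + k := by
          have := neg_abs_le k
          linarith
        have : 1 + k / t = (t + k) / t := by field_simp
        rw [this, Real.log_div (ne_of_gt htk) (ne_of_gt ht0)]
      have h5 := Metric.tendsto_nhds.mp hql ε1 hε1
      simp only [Real.dist_eq, sub_zero] at h5
      exact h5
    obtain ⟨X₂, hX₂⟩ := eventually_atTop.mp hdet
    refine ⟨max (max X₁ X₂) (T₀ + |k| + 1), ?_⟩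
    filter_upwards [hX₁] with t htL ht
    have ht1 : X₁ ≤ t := le_trans (le_trans (le_max_left _ _) (le_max_left _ _)) ht
    have ht2 : X₂ ≤ t := le_trans (le_trans (le_max_right _ _) (le_max_left _ _)) ht
    have ht3 : T₀ + |k| + 1 ≤ t := le_trans (le_max_right _ _) ht
    have htT : T₀ ≤ t := by
      have := abs_nonneg k
      linarith
    have htkT : T₀ ≤ t + k := by
      have := neg_abs_le k
      linarith
    have hft : 0 < f t := hfpos t htT
    have hftk : 0 < f (t + k) := hfpos (t + k) htkT
    have hLb := htL ht1
    have hPb := hX₂ t ht2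
    have hexp : f (t + k) = Real.exp ((L (t+k) - L t) +
        α * (Real.log (t + k) - Real.log t) - β * k) * f t := by
      have harith : (L (t+k) - L t) + α * (Real.log (t + k) - Real.log t) - β * k
          = Real.log (f (t + k)) - Real.log (f t) := by
        rw [hL]
        ring
      rw [harith, Real.exp_sub, Real.exp_log hftk, Real.exp_log hft]
      field_simp
    have habs1 := abs_le.mp hLb
    have habs2 := abs_lt.mp hPb
    constructor
    · rw [hexp, ← Real.exp_add]
      refine mul_le_mul_of_nonneg_right (Real.exp_le_exp.mpr ?_) hft.le
      linarith
    · rw [hexp, ← Real.exp_add]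
      refine mul_le_mul_of_nonneg_right (Real.exp_le_exp.mpr ?_) hft.le
      linarith
  -- translation identity for the survival integral
  have hshift : ∀ x : ℝ, (∫ t in Set.Ioi (x + k), f t) = ∫ t in Set.Ioi x, f (t + k) := by
    intro x
    have h1 := (measurePreserving_add_right volume k).setIntegral_preimage_emb
      (MeasurableEquiv.addRight k).measurableEmbedding f (Set.Ioi (x + k))
    have h2 : ((· + k) ⁻¹' Set.Ioi (x + k)) = Set.Ioi x := by
      rw [Set.preimage_add_const_Ioi]
      simp
    rw [h2] at h1
    exact h1.symm
  have hIntShift : Integrable (fun t : ℝ => f (t + k)) volume := by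
    have := ((measurePreserving_add_right volume k).integrable_comp_emb
      (MeasurableEquiv.addRight k).measurableEmbedding).mpr hf_int
    exact this
  -- comparison of tails
  have hcomp : ∀ ε1 : ℝ, 0 < ε1 → ∀ᶠ x : ℝ in atTop,
      (∫ t in Set.Ioi (x + k), f t) ≤
        Real.exp (2*ε1) * Real.exp (-β * k) * ∫ t in Set.Ioi x, f t ∧
      Real.exp (-(2*ε1)) * Real.exp (-β * k) * (∫ t in Set.Ioi x, f t) ≤
        ∫ t in Set.Ioi (x + k), f t := by
    intro ε1 hε1
    obtain ⟨X, hX⟩ := main_ae ε1 hε1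
    filter_upwards [eventually_ge_atTop X] with x hx
    have hae1 : ∀ᵐ t ∂(volume.restrict (Set.Ioi x)),
        f (t + k) ≤ Real.exp (2*ε1) * Real.exp (-β * k) * f t := by
      refine (ae_restrict_iff' measurableSet_Ioi).mpr ?_
      filter_upwards [hX] with t hb htmem
      exact (hb (le_trans hx (le_of_lt htmem))).1
    have hae2 : ∀ᵐ t ∂(volume.restrict (Set.Ioi x)),
        Real.exp (-(2*ε1)) * Real.exp (-β * k) * f t ≤ f (t + k) := by
      refine (ae_restrict_iff' measurableSet_Ioi).mpr ?_
      filter_upwards [hX] with t hb htmem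
      exact (hb (le_trans hx (le_of_lt htmem))).2
    constructor
    · rw [hshift x]
      calc (∫ t in Set.Ioi x, f (t + k))
          ≤ ∫ t in Set.Ioi x, Real.exp (2*ε1) * Real.exp (-β * k) * f t :=
            integral_mono_ae hIntShift.integrableOn
              ((hf_int.integrableOn).const_mul _) hae1
        _ = Real.exp (2*ε1) * Real.exp (-β * k) * ∫ t in Set.Ioi x, f t := by
            rw [← integral_const_mul]
    · rw [hshift x]
      calc Real.exp (-(2*ε1)) * Real.exp (-β * k) * (∫ t in Set.Ioi x, f t)
          = ∫ t in Set.Ioi x, Real.exp (-(2*ε1)) * Real.exp (-β * k) * f t := by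
            rw [← integral_const_mul]
        _ ≤ ∫ t in Set.Ioi x, f (t + k) :=
            integral_mono_ae ((hf_int.integrableOn).const_mul _)
              hIntShift.integrableOn hae2
  -- final ε-δ argument
  rw [Metric.tendsto_nhds]
  intro δ hδ
  set E : ℝ := Real.exp (-β * k) with hE
  have hE0 : 0 < E := Real.exp_pos _
  set ε1 : ℝ := min 1 (δ / (8 * E * Real.exp 2)) with hε1def
  have hε1pos : 0 < ε1 := by
    apply lt_min one_pos
    positivity
  have hε1le : ε1 ≤ δ / (8 * E * Real.exp 2) := min_le_right _ _
  have hε1le1 : ε1 ≤ 1 := min_le_left _ _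
  filter_upwards [hcomp ε1 hε1pos] with x hx
  have hFx : 0 < ∫ t in Set.Ioi x, f t := hFbar_pos x
  set R : ℝ := (∫ t in Set.Ioi (x + k), f t) / (∫ t in Set.Ioi x, f t) with hR
  have hup : R ≤ Real.exp (2*ε1) * E := by
    rw [hR, div_le_iff₀ hFx]
    exact hx.1
  have hlo : Real.exp (-(2*ε1)) * E ≤ R := by
    rw [hR, le_div_iff₀ hFx]
    exact hx.2
  -- exp estimates
  have hexp2 : Real.exp (2*ε1) ≤ Real.exp 2 := Real.exp_le_exp.mpr (by linarith)
  have hone_sub : 1 - Real.exp (-(2*ε1)) ≤ 2*ε1 := by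
    have := Real.add_one_le_exp (-(2*ε1))
    linarith
  have hexp_sub : Real.exp (2*ε1) - 1 ≤ 2*ε1 * Real.exp (2*ε1) := by
    have h1 : Real.exp (2*ε1) * Real.exp (-(2*ε1)) = 1 := by
      rw [← Real.exp_add]
      simp
    nlinarith [Real.exp_pos (2*ε1), hone_sub]
  have hkey : |R - E| ≤ δ / 2 := by
    rw [abs_le]
    constructor
    · -- -(δ/2) ≤ R - E
      have h1 : E - R ≤ E * (1 - Real.exp (-(2*ε1))) := by nlinarith
      have h2 : E * (1 - Real.exp (-(2*ε1))) ≤ E * (2*ε1) :=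
        mul_le_mul_of_nonneg_left hone_sub hE0.le
      have h3 : E * (2*ε1) ≤ δ / 2 := by
        have h4 : ε1 * (8 * E * Real.exp 2) ≤ δ := by
          rw [← le_div_iff₀ (by positivity)]
          exact hε1le
        nlinarith [Real.exp_pos 2, Real.one_le_exp (by norm_num : (0:ℝ) ≤ 2)]
      linarith
    · -- R - E ≤ δ/2
      have h1 : R - E ≤ E * (Real.exp (2*ε1) - 1) := by nlinarith
      have h2 : E * (Real.exp (2*ε1) - 1) ≤ E * (2*ε1 * Real.exp 2) := by
        refine mul_le_mul_of_nonneg_left ?_ hE0.le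
        calc Real.exp (2*ε1) - 1 ≤ 2*ε1 * Real.exp (2*ε1) := hexp_sub
          _ ≤ 2*ε1 * Real.exp 2 := by
              refine mul_le_mul_of_nonneg_left hexp2 (by positivity)
      have h3 : E * (2*ε1 * Real.exp 2) ≤ δ / 2 := by
        have h4 : ε1 * (8 * E * Real.exp 2) ≤ δ := by
          rw [← le_div_iff₀ (by positivity)]
          exact hε1le
        nlinarith [Real.exp_pos 2]
      linarith
  rw [Real.dist_eq]
  calc |R - E| ≤ δ / 2 := hkey
    _ < δ := by linarith
end

section
/- Poisson mixtures are identifiable: if two nonnegative random variables Λ₁ and Λ₂ satisfy E[e^{-Λ₁} Λ₁^n / n!] = E[e^{-Λ₂} Λ₂^n / n!] for all n ∈ ℕ, then Λ₁ and Λ₂ have the same distribution. -/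
open Filter Real MeasureTheory

open scoped ENNReal NNReal Topology

namespace PoissonMixtureAux

lemma real_exp_eq_tsum (x : ℝ) : Real.exp x = ∑' n : ℕ, x ^ n / (Nat.factorial n : ℝ) := by
  rw [Real.exp_eq_exp_ℝ, NormedSpace.exp_eq_tsum_div]

lemma term_le_one {l : ℝ} (hl : 0 ≤ l) (n : ℕ) :
    Real.exp (-l) * l ^ n / (Nat.factorial n : ℝ) ≤ 1 := by
  have h1 : l ^ n / (Nat.factorial n : ℝ) ≤ Real.exp l := by
    rw [real_exp_eq_tsum l]
    refine Summable.le_tsum (Real.summable_pow_div_factorial l) n fun k _ => by positivity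
  have h2 : Real.exp (-l) * l ^ n / (Nat.factorial n : ℝ)
      = Real.exp (-l) * (l ^ n / (Nat.factorial n : ℝ)) := by ring
  rw [h2]
  calc Real.exp (-l) * (l ^ n / (Nat.factorial n : ℝ))
      ≤ Real.exp (-l) * Real.exp l := by
        exact mul_le_mul_of_nonneg_left h1 (Real.exp_pos _).le
    _ = 1 := by rw [← Real.exp_add]; simp

lemma continuous_term (n : ℕ) :
    Continuous (fun l : ℝ => Real.exp (-l) * l ^ n / (Nat.factorial n : ℝ)) := by
  exact ((Real.continuous_exp.comp continuous_neg).mul (continuous_pow n)).div_const _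

variable {μ : Measure ℝ} [IsProbabilityMeasure μ]

/-- Series expansion of the Laplace transform in terms of the Poisson point probabilities. -/
lemma laplace_eq_tsum (hnn : ∀ᵐ l ∂μ, 0 ≤ l) {s : ℝ} (hs : 0 < s) (hs1 : s ≤ 1) :
    ∫ l, Real.exp (-(s * l)) ∂μ
      = ∑' n : ℕ, (1 - s) ^ n * ∫ l, Real.exp (-l) * l ^ n / (Nat.factorial n : ℝ) ∂μ := by
  have h1s0 : 0 ≤ 1 - s := by linarith
  set f : ℕ → ℝ → ℝ :=
    fun n l => (1 - s) ^ n * (Real.exp (-l) * l ^ n / (Nat.factorial n : ℝ)) with hf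
  have hmeas : ∀ n : ℕ, AEStronglyMeasurable (f n) μ := fun n =>
    (continuous_const.mul (continuous_term n)).aestronglyMeasurable
  have hbound : ∀ n : ℕ, ∫⁻ l, ‖f n l‖₊ ∂μ ≤ ENNReal.ofReal ((1 - s) ^ n) := by
    intro n
    have hae : ∀ᵐ l ∂μ, (‖f n l‖₊ : ℝ≥0∞) ≤ ENNReal.ofReal ((1 - s) ^ n) := by
      filter_upwards [hnn] with l hl
      rw [← enorm_eq_nnnorm, ← ofReal_norm]
      apply ENNReal.ofReal_le_ofReal
      have hfnn : 0 ≤ f n l := by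
        have : (0:ℝ) ≤ Real.exp (-l) * l ^ n / (Nat.factorial n : ℝ) := by positivity
        exact mul_nonneg (by positivity) this
      rw [Real.norm_eq_abs, abs_of_nonneg hfnn, hf]
      calc (1 - s) ^ n * (Real.exp (-l) * l ^ n / (Nat.factorial n : ℝ))
          ≤ (1 - s) ^ n * 1 :=
            mul_le_mul_of_nonneg_left (term_le_one hl n) (by positivity)
        _ = (1 - s) ^ n := mul_one _
    calc ∫⁻ l, ‖f n l‖₊ ∂μ ≤ ∫⁻ _, ENNReal.ofReal ((1 - s) ^ n) ∂μ := lintegral_mono_ae hae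
      _ = ENNReal.ofReal ((1 - s) ^ n) := by simp [lintegral_const, measure_univ]
  have hsum : (∑' n : ℕ, ∫⁻ l, ‖f n l‖₊ ∂μ) ≠ ∞ := by
    have hr : ENNReal.ofReal (1 - s) < 1 := ENNReal.ofReal_lt_one.mpr (by linarith)
    have hgeo : (∑' n : ℕ, ENNReal.ofReal ((1 - s) ^ n)) ≠ ∞ := by
      have : (∑' n : ℕ, ENNReal.ofReal ((1 - s) ^ n))
          = (1 - ENNReal.ofReal (1 - s))⁻¹ := by
        simp_rw [ENNReal.ofReal_pow h1s0]
        exact ENNReal.tsum_geometric _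
      rw [this]
      refine ENNReal.inv_ne_top.mpr ?_
      rw [Ne, tsub_eq_zero_iff_le]
      exact fun hle => absurd (lt_of_lt_of_le hr hle) (lt_irrefl _)
    exact ne_top_of_le_ne_top hgeo (ENNReal.tsum_le_tsum hbound)
  have hswap := integral_tsum hmeas hsum
  have hpt : ∀ l : ℝ, ∑' n : ℕ, f n l = Real.exp (-(s * l)) := by
    intro l
    have hterm : ∀ n : ℕ, f n l
        = Real.exp (-l) * (((1 - s) * l) ^ n / (Nat.factorial n : ℝ)) := by
      intro n; rw [hf]; simp only [mul_pow]; ring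
    rw [tsum_congr hterm, tsum_mul_left, ← real_exp_eq_tsum, ← Real.exp_add]
    congr 1; ring
  calc ∫ l, Real.exp (-(s * l)) ∂μ
      = ∫ l, ∑' n : ℕ, f n l ∂μ := integral_congr_ae (ae_of_all _ fun l => (hpt l).symm)
    _ = ∑' n : ℕ, ∫ l, f n l ∂μ := hswap
    _ = ∑' n : ℕ, (1 - s) ^ n * ∫ l, Real.exp (-l) * l ^ n / (Nat.factorial n : ℝ) ∂μ := by
        refine tsum_congr fun n => ?_
        rw [hf]
        exact integral_const_mul _ _

lemma integrable_cexp (hnn : ∀ᵐ l ∂μ, 0 ≤ l) {z : ℂ} (hz : 0 ≤ z.re) :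
    Integrable (fun l : ℝ => Complex.exp (-(z * l))) μ := by
  refine Integrable.mono' (integrable_const 1) ?_ ?_
  · exact (Complex.continuous_exp.comp
      ((continuous_const.mul Complex.continuous_ofReal).neg)).aestronglyMeasurable
  · filter_upwards [hnn] with l hl
    have hre : (-(z * (l:ℂ))).re = -(z.re * l) := by
      simp [Complex.mul_re]
    rw [Complex.norm_exp, hre]
    exact Real.exp_le_one_iff.mpr (neg_nonpos.mpr (mul_nonneg hz hl))

lemma mul_exp_neg_le {a l : ℝ} (ha : 0 < a) (hl : 0 ≤ l) :
    l * Real.exp (-(a * l)) ≤ 1 / a := by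
  have hx : a * l ≤ Real.exp (a * l) := by
    have := Real.add_one_le_exp (a * l); linarith
  rw [le_div_iff₀ ha, Real.exp_neg]
  have he : 0 < Real.exp (a * l) := Real.exp_pos _
  have h2 : l * (Real.exp (a * l))⁻¹ * a = (a * l) / Real.exp (a * l) := by
    rw [div_eq_mul_inv]; ring
  rw [h2, div_le_one he]
  exact hx

lemma analyticOnNhd_claplace (hnn : ∀ᵐ l ∂μ, 0 ≤ l) :
    AnalyticOnNhd ℂ (fun z : ℂ => ∫ l, Complex.exp (-(z * l)) ∂μ) {z : ℂ | 0 < z.re} := by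
  have hopen : IsOpen {z : ℂ | 0 < z.re} := isOpen_lt continuous_const Complex.continuous_re
  refine DifferentiableOn.analyticOnNhd (fun z₀ hz₀ => ?_) hopen
  have hre : 0 < z₀.re := hz₀
  have hε_pos : 0 < z₀.re / 2 := by positivity
  have hFcont : ∀ z : ℂ, Continuous (fun l : ℝ => Complex.exp (-(z * l))) := fun z =>
    Complex.continuous_exp.comp ((continuous_const.mul Complex.continuous_ofReal).neg)
  have main := hasDerivAt_integral_of_dominated_loc_of_deriv_le
    (F := fun (z : ℂ) (l : ℝ) => Complex.exp (-(z * l)))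
    (F' := fun (z : ℂ) (l : ℝ) => -(l:ℂ) * Complex.exp (-(z * l)))
    (x₀ := z₀) (bound := fun _ => 2 / z₀.re) (Metric.ball_mem_nhds z₀ hε_pos)
    (Eventually.of_forall fun z => (hFcont z).aestronglyMeasurable)
    (integrable_cexp hnn hre.le)
    (((Complex.continuous_ofReal.neg).mul (hFcont z₀)).aestronglyMeasurable)
    ?_ (integrable_const _) ?_
  · exact main.2.differentiableAt.differentiableWithinAt
  · -- bound
    filter_upwards [hnn] with l hl
    intro z hz
    have hzre : z₀.re / 2 ≤ z.re := by
      have hd : dist z z₀ < z₀.re / 2 := Metric.mem_ball.mp hz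
      have habs : |z.re - z₀.re| ≤ ‖z - z₀‖ := by
        simpa [Complex.sub_re] using Complex.abs_re_le_norm (z - z₀)
      rw [Complex.dist_eq] at hd
      have := (abs_lt.mp (lt_of_le_of_lt habs hd)).1
      linarith
    have hnorm : ‖-(l:ℂ) * Complex.exp (-(z * l))‖ = l * Real.exp (-(z.re * l)) := by
      rw [norm_mul, norm_neg, Complex.norm_real, Complex.norm_exp]
      have hre2 : (-(z * (l:ℂ))).re = -(z.re * l) := by simp [Complex.mul_re]
      rw [hre2, Real.norm_eq_abs, abs_of_nonneg hl]
    rw [hnorm]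
    calc l * Real.exp (-(z.re * l))
        ≤ l * Real.exp (-(z₀.re / 2 * l)) := by
          refine mul_le_mul_of_nonneg_left ?_ hl
          exact Real.exp_le_exp.mpr (neg_le_neg (mul_le_mul_of_nonneg_right hzre hl))
      _ ≤ 1 / (z₀.re / 2) := mul_exp_neg_le hε_pos hl
      _ = 2 / z₀.re := one_div_div _ _
  · -- differentiability
    refine ae_of_all _ fun l => ?_
    intro z hz
    have h1 : HasDerivAt (fun z : ℂ => -(z * (l:ℂ))) (-(l:ℂ)) z :=
      (hasDerivAt_mul_const (l:ℂ)).neg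
    simpa [mul_comm] using h1.cexp

lemma claplace_ofReal (s : ℝ) :
    ∫ l, Complex.exp (-((s:ℂ) * l)) ∂μ = ((∫ l, Real.exp (-(s * l)) ∂μ : ℝ) : ℂ) := by
  have hpt : ∀ l : ℝ, Complex.exp (-((s:ℂ) * l)) = ((Real.exp (-(s * l)) : ℝ) : ℂ) := by
    intro l
    rw [Complex.ofReal_exp]
    norm_cast
  simp_rw [hpt]
  exact integral_ofReal

end PoissonMixtureAux

open PoissonMixtureAux

/-- Identifiability of Poisson mixtures: two nonnegative mixing laws producing the same
mixed Poisson point probabilities coincide. -/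
theorem poisson_mixture_identifiable
    (μ₁ μ₂ : Measure ℝ) [IsProbabilityMeasure μ₁] [IsProbabilityMeasure μ₂]
    (hnonneg₁ : ∀ᵐ lam ∂μ₁, 0 ≤ lam)
    (hnonneg₂ : ∀ᵐ lam ∂μ₂, 0 ≤ lam)
    (h : ∀ n : ℕ,
      (∫ lam, Real.exp (-lam) * lam ^ n / (Nat.factorial n) ∂μ₁)
        = ∫ lam, Real.exp (-lam) * lam ^ n / (Nat.factorial n) ∂μ₂) :
    μ₁ = μ₂ := by
  classical
  -- Step 1: real Laplace transforms agree on (0, 1].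
  have hlap_small : ∀ s : ℝ, 0 < s → s ≤ 1 →
      ∫ l, Real.exp (-(s * l)) ∂μ₁ = ∫ l, Real.exp (-(s * l)) ∂μ₂ := by
    intro s hs hs1
    rw [laplace_eq_tsum hnonneg₁ hs hs1, laplace_eq_tsum hnonneg₂ hs hs1]
    exact tsum_congr fun n => by rw [h n]
  -- Step 2: complex Laplace transforms agree on the right half plane, by analytic continuation.
  have hU : IsPreconnected {z : ℂ | 0 < z.re} := (convex_halfSpace_re_gt 0).isPreconnected
  have hmem : (2⁻¹ : ℂ) ∈ {z : ℂ | 0 < z.re} := by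
    simp [Set.mem_setOf_eq]
  -- A sequence of points in (0,1] converging to 1/2 within the punctured neighborhood.
  have hfreq : ∃ᶠ z in 𝓝[≠] (2⁻¹ : ℂ),
      (fun z : ℂ => ∫ l, Complex.exp (-(z * l)) ∂μ₁) z
        = (fun z : ℂ => ∫ l, Complex.exp (-(z * l)) ∂μ₂) z := by
    set u : ℕ → ℂ := fun n => ((2⁻¹ + ((n : ℝ) + 2)⁻¹ : ℝ) : ℂ) with hu
    have htend_r : Tendsto (fun n : ℕ => (2⁻¹ + ((n : ℝ) + 2)⁻¹ : ℝ)) atTop (𝓝 (2⁻¹ : ℝ)) := by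
      have h0 : Tendsto (fun n : ℕ => ((n : ℝ) + 2)⁻¹) atTop (𝓝 0) := by
        apply tendsto_inv_atTop_zero.comp
        exact tendsto_atTop_add_const_right _ 2 tendsto_natCast_atTop_atTop
      have := tendsto_const_nhds.add h0 (f := fun _ : ℕ => (2⁻¹ : ℝ))
      simpa using this
    have htend : Tendsto u atTop (𝓝[≠] (2⁻¹ : ℂ)) := by
      apply tendsto_nhdsWithin_of_tendsto_nhds_of_eventually_within
      · have := (Complex.continuous_ofReal.tendsto (2⁻¹ : ℝ)).comp htend_r
        simpa [hu, Function.comp_def] using this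
      · refine Eventually.of_forall fun n => ?_
        simp only [Set.mem_compl_iff, Set.mem_singleton_iff, hu]
        intro hcontra
        have : (2⁻¹ + ((n : ℝ) + 2)⁻¹ : ℝ) = (2⁻¹ : ℝ) := by
          have := hcontra
          rw [show (2⁻¹ : ℂ) = ((2⁻¹ : ℝ) : ℂ) by norm_num] at this
          exact_mod_cast this
        have hpos : (0:ℝ) < ((n : ℝ) + 2)⁻¹ := by positivity
        linarith
    apply htend.frequently
    refine Frequently.of_forall fun n => ?_
    have hpos : (0:ℝ) < ((n : ℝ) + 2)⁻¹ := by positivity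
    have hle : ((n : ℝ) + 2)⁻¹ ≤ 2⁻¹ := by
      apply inv_anti₀ (by norm_num)
      have : (0:ℝ) ≤ (n : ℝ) := Nat.cast_nonneg n
      linarith
    have hs : (0:ℝ) < 2⁻¹ + ((n : ℝ) + 2)⁻¹ := by positivity
    have hs1 : (2⁻¹ + ((n : ℝ) + 2)⁻¹ : ℝ) ≤ 1 := by
      have : (2⁻¹ : ℝ) + 2⁻¹ = 1 := by norm_num
      linarith
    simp only [hu]
    rw [claplace_ofReal, claplace_ofReal, hlap_small _ hs hs1]
  have heq : Set.EqOn (fun z : ℂ => ∫ l, Complex.exp (-(z * l)) ∂μ₁)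
      (fun z : ℂ => ∫ l, Complex.exp (-(z * l)) ∂μ₂) {z : ℂ | 0 < z.re} :=
    (analyticOnNhd_claplace hnonneg₁).eqOn_of_preconnected_of_frequently_eq
      (analyticOnNhd_claplace hnonneg₂) hU hmem hfreq
  -- Step 3: real Laplace transforms agree for all positive s.
  have hlap : ∀ s : ℝ, 0 < s →
      ∫ l, Real.exp (-(s * l)) ∂μ₁ = ∫ l, Real.exp (-(s * l)) ∂μ₂ := by
    intro s hs
    have hmem' : ((s : ℂ)) ∈ {z : ℂ | 0 < z.re} := by simpa using hs
    have := heq hmem'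
    simp only at this
    rw [claplace_ofReal, claplace_ofReal] at this
    exact_mod_cast this
  -- Step 4: the pushforwards under l ↦ exp (-l) have equal moments.
  set T : ℝ → ℝ := fun l => Real.exp (-l) with hT
  have hTmeas : Measurable T := (Real.continuous_exp.comp continuous_neg).measurable
  set κ₁ : Measure ℝ := Measure.map T μ₁ with hκ₁
  set κ₂ : Measure ℝ := Measure.map T μ₂ with hκ₂
  have hκ₁prob : IsProbabilityMeasure κ₁ := Measure.isProbabilityMeasure_map hTmeas.aemeasurable
  have hκ₂prob : IsProbabilityMeasure κ₂ := Measure.isProbabilityMeasure_map hTmeas.aemeasurable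
  have hmoment : ∀ n : ℕ, ∫ t, t ^ n ∂κ₁ = ∫ t, t ^ n ∂κ₂ := by
    intro n
    rcases Nat.eq_zero_or_pos n with hn | hn
    · subst hn
      simp [measure_univ]
    · have hκint : ∀ (μ : Measure ℝ), ∫ t, t ^ n ∂(Measure.map T μ)
          = ∫ l, Real.exp (-((n : ℝ) * l)) ∂μ := by
        intro μ
        rw [integral_map hTmeas.aemeasurable (continuous_pow n).aestronglyMeasurable]
        refine integral_congr_ae (ae_of_all _ fun l => ?_)
        show Real.exp (-l) ^ n = Real.exp (-((n : ℝ) * l))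
        rw [show (-((n:ℝ) * l)) = (n : ℝ) * (-l) by ring, Real.exp_nat_mul]
      rw [hκ₁, hκ₂, hκint, hκint]
      exact hlap _ (by exact_mod_cast hn)
  -- Step 5: the pushforwards are supported in [0, 1].
  have hsupp : ∀ (μ : Measure ℝ), (∀ᵐ l ∂μ, 0 ≤ l) →
      ∀ᵐ t ∂(Measure.map T μ), t ∈ Set.Icc (0:ℝ) 1 := by
    intro μ hnn
    simp only [Set.mem_Icc]
    rw [MeasureTheory.ae_map_iff hTmeas.aemeasurable
      (measurableSet_Icc (a := (0:ℝ)) (b := 1))]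
    filter_upwards [hnn] with l hl
    constructor
    · exact (Real.exp_pos _).le
    · exact Real.exp_le_one_iff.mpr (neg_nonpos.mpr hl)
  have hsupp₁ : ∀ᵐ t ∂κ₁, t ∈ Set.Icc (0:ℝ) 1 := hsupp μ₁ hnonneg₁
  have hsupp₂ : ∀ᵐ t ∂κ₂, t ∈ Set.Icc (0:ℝ) 1 := hsupp μ₂ hnonneg₂
  have hres₁ : κ₁.restrict (Set.Icc (0:ℝ) 1) = κ₁ := Measure.restrict_eq_self_of_ae_mem hsupp₁
  have hres₂ : κ₂.restrict (Set.Icc (0:ℝ) 1) = κ₂ := Measure.restrict_eq_self_of_ae_mem hsupp₂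
  have hint₁ : ∀ g : ℝ → ℝ, Continuous g → Integrable g κ₁ := by
    intro g hg
    rw [← hres₁]
    exact hg.continuousOn.integrableOn_compact isCompact_Icc
  have hint₂ : ∀ g : ℝ → ℝ, Continuous g → Integrable g κ₂ := by
    intro g hg
    rw [← hres₂]
    exact hg.continuousOn.integrableOn_compact isCompact_Icc
  -- Step 6: integrals of polynomials agree.
  have hpoly : ∀ p : Polynomial ℝ, ∫ t, p.eval t ∂κ₁ = ∫ t, p.eval t ∂κ₂ := by
    intro p
    induction p using Polynomial.induction_on' with
    | add p q hp hq =>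
      rw [show (fun t => (p + q).eval t) = fun t => p.eval t + q.eval t by
        funext t; simp [Polynomial.eval_add]]
      rw [integral_add (hint₁ _ (Polynomial.continuous p)) (hint₁ _ (Polynomial.continuous q)),
        integral_add (hint₂ _ (Polynomial.continuous p)) (hint₂ _ (Polynomial.continuous q)),
        hp, hq]
    | monomial n a =>
      simp only [Polynomial.eval_monomial]
      rw [integral_const_mul, integral_const_mul, hmoment n]
  -- Step 7: integrals of bounded continuous functions agree, hence the pushforwards agree.
  have hκeq : κ₁ = κ₂ := by
    apply ext_of_forall_lintegral_eq_of_IsFiniteMeasure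
    intro f
    have hg : Continuous fun x : ℝ => (f x : ℝ) := NNReal.continuous_coe.comp f.continuous
    have hgint : ∫ x, (f x : ℝ) ∂κ₁ = ∫ x, (f x : ℝ) ∂κ₂ := by
      set A := ∫ x, (f x : ℝ) ∂κ₁
      set B := ∫ x, (f x : ℝ) ∂κ₂
      have hdiff : ∀ ε : ℝ, 0 < ε → |A - B| ≤ 2 * ε := by
        intro ε hε
        obtain ⟨p, hpclose⟩ := exists_polynomial_near_of_continuousOn 0 1 _
          hg.continuousOn ε hε
        have hclose : ∀ (κ : Measure ℝ), IsProbabilityMeasure κ →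
            (∀ᵐ t ∂κ, t ∈ Set.Icc (0:ℝ) 1) →
            (∀ g : ℝ → ℝ, Continuous g → Integrable g κ) →
            |(∫ x, (f x : ℝ) ∂κ) - ∫ x, p.eval x ∂κ| ≤ ε := by
          intro κ hκprob hκsupp hκint
          rw [← integral_sub (hκint _ hg) (hκint _ (Polynomial.continuous p))]
          have hb : ∀ᵐ x ∂κ, ‖(f x : ℝ) - p.eval x‖ ≤ ε := by
            filter_upwards [hκsupp] with x hx
            rw [Real.norm_eq_abs, abs_sub_comm]
            exact (hpclose x hx).le
          calc |∫ x, ((f x : ℝ) - p.eval x) ∂κ| ≤ ∫ _, ε ∂κ :=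
              norm_integral_le_of_norm_le (integrable_const ε) hb
            _ = ε := by simp [measure_univ]
        have h₁ := hclose κ₁ hκ₁prob hsupp₁ hint₁
        have h₂ := hclose κ₂ hκ₂prob hsupp₂ hint₂
        have hABp : A - B = ((∫ x, (f x : ℝ) ∂κ₁) - ∫ x, p.eval x ∂κ₁)
            - ((∫ x, (f x : ℝ) ∂κ₂) - ∫ x, p.eval x ∂κ₂) := by
          rw [hpoly p]; ring
        rw [hABp]
        calc |_ - _| ≤ |(∫ x, (f x : ℝ) ∂κ₁) - ∫ x, p.eval x ∂κ₁|
              + |(∫ x, (f x : ℝ) ∂κ₂) - ∫ x, p.eval x ∂κ₂| := abs_sub _ _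
          _ ≤ 2 * ε := by linarith
      have habs : |A - B| ≤ 0 := by
        by_contra hcon
        push_neg at hcon
        have := hdiff (|A - B| / 4) (by linarith)
        linarith
      have := abs_nonneg (A - B)
      have : |A - B| = 0 := le_antisymm habs this
      have := abs_eq_zero.mp this
      linarith [this]
    rw [lintegral_coe_eq_integral _ (hint₁ _ hg), lintegral_coe_eq_integral _ (hint₂ _ hg),
      hgint]
  -- Step 8: recover the original measures.
  have hrecover : ∀ (μ : Measure ℝ) [IsProbabilityMeasure μ],
      Measure.map (fun t => -Real.log t) (Measure.map T μ) = μ := by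
    intro μ _
    rw [Measure.map_map (g := fun t => -Real.log t) (Real.measurable_log.neg) hTmeas]
    have : ((fun t => -Real.log t) ∘ T) = id := by
      funext l
      simp [hT, Real.log_exp]
    rw [this, Measure.map_id]
  calc μ₁ = Measure.map (fun t => -Real.log t) κ₁ := (hrecover μ₁).symm
    _ = Measure.map (fun t => -Real.log t) κ₂ := by rw [hκeq]
    _ = μ₂ := hrecover μ₂
end

section
/- The negative binomial distribution with parameters a > 0 and success probability q = 1/(b+1) ∈ (0,1) satisfies lim_{n→∞} (1 - F(n+1))/(1 - F(n)) = 1/(1+b) ∈ (0,1); in particular it is not long tailed, confirming that the Poisson-gamma mixture is pseudo-Gumbel. -/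
open Filter Real

open Topology

namespace NegBinAux

/-- coefficient of the binomial series -/
noncomputable def c (a : ℝ) (n : ℕ) : ℝ := Real.Gamma (a + n) / (Real.Gamma a * Nat.factorial n)

lemma c_pos {a : ℝ} (ha : 0 < a) (n : ℕ) : 0 < c a n := by
  have h1 : 0 < Real.Gamma (a + n) := Real.Gamma_pos_of_pos (by positivity)
  have h2 : 0 < Real.Gamma a := Real.Gamma_pos_of_pos ha
  have h3 : (0:ℝ) < Nat.factorial n := by positivity
  exact div_pos h1 (by positivity)

lemma c_zero {a : ℝ} (ha : 0 < a) : c a 0 = 1 := by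
  have h2 : Real.Gamma a ≠ 0 := (Real.Gamma_pos_of_pos ha).ne'
  simp [c, h2]

lemma c_succ {a : ℝ} (ha : 0 < a) (n : ℕ) :
    ((n:ℝ) + 1) * c a (n + 1) = (a + n) * c a n := by
  have hne : a + (n:ℝ) ≠ 0 := by positivity
  have hg : Real.Gamma (a + (n+1:ℕ)) = (a + n) * Real.Gamma (a + n) := by
    push_cast
    rw [show a + ((n:ℝ) + 1) = (a + n) + 1 by ring, Real.Gamma_add_one hne]
  have h2 : Real.Gamma a ≠ 0 := (Real.Gamma_pos_of_pos ha).ne'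
  have h3 : ((Nat.factorial n : ℝ)) ≠ 0 := by positivity
  rw [c, c, hg, Nat.factorial_succ]
  push_cast
  field_simp

lemma tend_aux (t : ℝ) : Tendsto (fun n : ℕ => (t + n) / (n + 1)) atTop (𝓝 1) := by
  have h := tendsto_one_div_add_atTop_nhds_zero_nat (𝕜 := ℝ)
  have h2 := (h.const_mul (t - 1)).const_add 1
  simp only [mul_zero, add_zero] at h2
  refine h2.congr fun n => ?_
  have hn : ((n:ℝ) + 1) ≠ 0 := by positivity
  field_simp
  ring

/-- generic ratio-test summability for weights with ratio → 1 -/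
lemma summable_weight {w : ℕ → ℝ} (hw : ∀ n, 0 < w n)
    (hr : Tendsto (fun n => w (n + 1) / w n) atTop (𝓝 1))
    {x : ℝ} (hx : |x| < 1) : Summable (fun n => w n * x ^ n) := by
  rcases eq_or_ne x 0 with rfl | hx0
  · apply summable_of_ne_finset_zero (s := {0})
    intro n hn
    simp only [Finset.mem_singleton] at hn
    simp [zero_pow hn]
  · apply summable_of_ratio_test_tendsto_lt_one hx
    · filter_upwards with n
      exact mul_ne_zero (hw n).ne' (pow_ne_zero n hx0)
    · have h2 : Tendsto (fun n => (w (n + 1) / w n) * |x|) atTop (𝓝 (1 * |x|)) :=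
        hr.mul_const _
      rw [one_mul] at h2
      refine h2.congr fun n => ?_
      rw [norm_mul, norm_mul, norm_pow, norm_pow, Real.norm_eq_abs, Real.norm_eq_abs,
        Real.norm_eq_abs, pow_succ]
      have h3 : w n ≠ 0 := (hw n).ne'
      have h4 : |x| ^ n ≠ 0 := pow_ne_zero n (abs_ne_zero.mpr hx0)
      rw [abs_of_pos (hw n), abs_of_pos (hw (n+1))]
      field_simp

section
variable {a : ℝ} (ha : 0 < a)
include ha

lemma c_div (n : ℕ) : c a (n + 1) / c a n = (a + n) / (n + 1) := by
  have h := c_succ ha n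
  have h1 : c a n ≠ 0 := (c_pos ha n).ne'
  have h2 : ((n:ℝ) + 1) ≠ 0 := by positivity
  field_simp
  linarith [h]

/-- summability of `c a n * x ^ n` -/
lemma Sc {x : ℝ} (hx : |x| < 1) : Summable (fun n => c a n * x ^ n) :=
  summable_weight (c_pos ha) (((tend_aux a).congr fun n => (c_div ha n).symm)) hx

/-- summability of `(a + n) * c a n * x ^ n` -/
lemma Sac {x : ℝ} (hx : |x| < 1) : Summable (fun n => (a + n) * c a n * x ^ n) := by
  refine summable_weight (w := fun n => (a + n) * c a n)
    (fun n => mul_pos (by positivity) (c_pos ha n)) ?_ hx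
  have key : ∀ n : ℕ, ((a + 1) + n) / (n + 1)
      = ((a + (n+1)) * c a (n+1)) / ((a + n) * c a n) := by
    intro n
    rw [mul_div_mul_comm, c_div ha n]
    have h1 : a + (n:ℝ) ≠ 0 := by positivity
    have h2 : ((n:ℝ) + 1) ≠ 0 := by positivity
    push_cast
    field_simp
    ring
  exact ((tend_aux (a + 1)).congr fun n => by rw [key n]; push_cast; ring_nf)

/-- summability of the derivative series -/
lemma Sder {x : ℝ} (hx : |x| < 1) : Summable (fun n => c a n * ((n:ℝ) * x ^ (n - 1))) := by
  rw [← summable_nat_add_iff 1]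
  refine (Sac ha hx).congr fun n => ?_
  have h := c_succ ha n
  simp only [Nat.add_sub_cancel]
  rw [← h]
  push_cast
  ring

/-- summability of `n * c a n * x ^ n` -/
lemma Sn {x : ℝ} (hx : |x| < 1) : Summable (fun n : ℕ => (n:ℝ) * c a n * x ^ n) := by
  refine Summable.of_norm_bounded (g := fun n => (a + n) * c a n * |x| ^ n)
    (Sac ha (x := |x|) (by rwa [abs_abs])) fun n => ?_
  rw [norm_mul, norm_mul, norm_pow, Real.norm_eq_abs, Real.norm_eq_abs, Real.norm_eq_abs]
  rw [Nat.abs_cast, abs_of_pos (c_pos ha n)]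
  have h1 : (n:ℝ) ≤ a + n := by linarith
  exact mul_le_mul_of_nonneg_right (mul_le_mul_of_nonneg_right h1 (c_pos ha n).le)
    (by positivity)


lemma hasSum_one {q : ℝ} (hq0 : 0 ≤ q) (hq1 : q < 1) :
    HasSum (fun n => c a n * (1 - q) ^ a * q ^ n) 1 := by
  set r : ℝ := (1 + q) / 2 with hrdef
  have hqr : q < r := by rw [hrdef]; linarith
  have hr1 : r < 1 := by rw [hrdef]; linarith
  have hr0 : 0 < r := by rw [hrdef]; linarith
  have habs : ∀ x ∈ Set.Ioo (-r) r, |x| < r := fun x hx => abs_lt.2 ⟨hx.1, hx.2⟩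
  have habs1 : ∀ x ∈ Set.Ioo (-r) r, |x| < 1 := fun x hx => (habs x hx).trans hr1
  -- summability of the bound on derivatives
  have hu : Summable (fun n : ℕ => (a + n) * c a n * r ^ (n - 1)) := by
    rw [← summable_nat_add_iff 1]
    have hw : ∀ n : ℕ, 0 < (a + ((n:ℝ) + 1)) * c a (n + 1) :=
      fun n => mul_pos (by positivity) (c_pos ha (n + 1))
    refine (summable_weight hw ?_ (x := r) (by rwa [abs_of_pos hr0])).congr fun n => ?_
    · have h2 := (tend_aux (a + 1)).comp (tendsto_add_atTop_nat 1)
      refine h2.congr fun n => ?_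
      simp only [Function.comp_apply]
      rw [mul_div_mul_comm, c_div ha (n + 1)]
      have h3 : a + ((n:ℝ) + 1) ≠ 0 := by positivity
      have h4 : ((n:ℝ) + 1 + 1) ≠ 0 := by positivity
      push_cast
      field_simp
      ring
    · simp only [Nat.add_sub_cancel]
      push_cast
      ring
  have hbound : ∀ (n : ℕ), ∀ y ∈ Set.Ioo (-r) r,
      ‖c a n * ((n:ℝ) * y ^ (n - 1))‖ ≤ (a + n) * c a n * r ^ (n - 1) := by
    intro n y hy
    rcases Nat.eq_zero_or_pos n with rfl | hn
    · simp only [Nat.cast_zero, zero_mul, mul_zero, norm_zero]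
      exact (mul_pos (mul_pos (by positivity) (c_pos ha 0)) (by positivity)).le
    · rw [norm_mul, norm_mul, norm_pow, Real.norm_eq_abs, Real.norm_eq_abs, Real.norm_eq_abs,
        Nat.abs_cast, abs_of_pos (c_pos ha n)]
      have h1 : (n:ℝ) ≤ a + n := by linarith
      have h2 : |y| ^ (n - 1) ≤ r ^ (n - 1) :=
        pow_le_pow_left₀ (abs_nonneg y) (habs y hy).le _
      calc c a n * ((n:ℝ) * |y| ^ (n - 1)) ≤ c a n * ((a + n) * r ^ (n - 1)) := by
            apply mul_le_mul_of_nonneg_left _ (c_pos ha n).le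
            exact mul_le_mul h1 h2 (by positivity) (by positivity)
        _ = (a + n) * c a n * r ^ (n - 1) := by ring
  have h0t : (0:ℝ) ∈ Set.Ioo (-r) r := ⟨by linarith, hr0⟩
  have hsum0 : Summable fun n => c a n * (0:ℝ) ^ n := by
    apply summable_of_ne_finset_zero (s := {0})
    intro n hn
    simp only [Finset.mem_singleton] at hn
    simp [zero_pow hn]
  have hder : ∀ y ∈ Set.Ioo (-r) r, HasDerivAt (fun x => ∑' n : ℕ, c a n * x ^ n)
      (∑' n : ℕ, c a n * ((n:ℝ) * y ^ (n - 1))) y := by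
    intro y hy
    exact hasDerivAt_tsum_of_isPreconnected hu isOpen_Ioo (convex_Ioo _ _).isPreconnected
      (fun n x _ => (hasDerivAt_pow n x).const_mul (c a n)) hbound h0t hsum0 hy
  have hD : ∀ x : ℝ, |x| < 1 → (∑' n : ℕ, c a n * ((n:ℝ) * x ^ (n - 1)))
      = ∑' n : ℕ, (a + (n:ℝ)) * c a n * x ^ n := by
    intro x hx
    rw [Summable.tsum_eq_zero_add (Sder ha hx)]
    simp only [Nat.cast_zero, zero_mul, mul_zero, zero_add, Nat.add_sub_cancel]
    refine tsum_congr fun n => ?_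
    have h := c_succ ha n
    push_cast
    linear_combination (x ^ n) * h
  have hODE : ∀ x : ℝ, |x| < 1 →
      (1 - x) * ∑' n : ℕ, (a + (n:ℝ)) * c a n * x ^ n
        = a * ∑' n : ℕ, c a n * x ^ n := by
    intro x hx
    have hxD : x * ∑' n : ℕ, (a + (n:ℝ)) * c a n * x ^ n
        = ∑' n : ℕ, (n:ℝ) * c a n * x ^ n := by
      rw [← tsum_mul_left, Summable.tsum_eq_zero_add (Sn ha hx)]
      simp only [Nat.cast_zero, zero_mul, zero_add]
      refine tsum_congr fun n => ?_
      have h := c_succ ha n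
      push_cast
      linear_combination (-(x ^ n * x)) * h
    have hkey : (∑' n : ℕ, (a + (n:ℝ)) * c a n * x ^ n)
        - ∑' n : ℕ, (n:ℝ) * c a n * x ^ n = a * ∑' n : ℕ, c a n * x ^ n := by
      rw [← Summable.tsum_sub (Sac ha hx) (Sn ha hx), ← tsum_mul_left]
      exact tsum_congr fun n => by ring
    rw [sub_mul, one_mul, hxD]
    exact hkey
  -- the auxiliary function is constant on [0, q]
  have hderh : ∀ x ∈ Set.Ioo (-r) r,
      HasDerivAt (fun x => (∑' n : ℕ, c a n * x ^ n) * (1 - x) ^ a) 0 x := by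
    intro x hx
    have hx1 : |x| < 1 := habs1 x hx
    have h1x : (0:ℝ) < 1 - x := by
      have := (abs_lt.1 hx1).2; linarith
    have hg := hder x hx
    rw [hD x hx1] at hg
    have hp1 : HasDerivAt (fun y : ℝ => 1 - y) (-1) x := (hasDerivAt_id x).const_sub 1
    have hp2 : HasDerivAt (fun y : ℝ => (1 - y) ^ a) (a * (1 - x) ^ (a - 1) * (-1)) x :=
      (Real.hasDerivAt_rpow_const (p := a) (Or.inl h1x.ne')).comp x hp1
    have hmul := hg.mul hp2
    refine hmul.congr_deriv ?_
    have hsplit : (1 - x) ^ a = (1 - x) ^ (a - 1) * (1 - x) := by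
      rw [← Real.rpow_add_one h1x.ne' (a - 1)]
      norm_num
    rw [hsplit]
    have hode := hODE x hx1
    linear_combination ((1 - x) ^ (a - 1)) * hode
  have hsub : Set.Icc (0:ℝ) q ⊆ Set.Ioo (-r) r := by
    intro x hx
    exact ⟨by linarith [hx.1], by linarith [hx.2]⟩
  have hcont : ContinuousOn (fun x => (∑' n : ℕ, c a n * x ^ n) * (1 - x) ^ a)
      (Set.Icc 0 q) :=
    fun x hx => ((hderh x (hsub hx)).continuousAt).continuousWithinAt
  have hconst := constant_of_has_deriv_right_zero hcont
    (fun x hx => (hderh x (hsub (Set.Ico_subset_Icc_self hx))).hasDerivWithinAt)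
  have hq_eq := hconst q ⟨hq0, le_refl q⟩
  have hG0 : (∑' n : ℕ, c a n * (0:ℝ) ^ n) = 1 := by
    rw [tsum_eq_single 0 (fun n hn => by simp [zero_pow hn])]
    simp [c_zero ha]
  rw [sub_zero, Real.one_rpow, mul_one, hG0] at hq_eq
  -- conclude
  have hqabs : |q| < 1 := by rwa [abs_of_nonneg hq0]
  have hsummable : Summable (fun n => c a n * (1 - q) ^ a * q ^ n) :=
    ((Sc ha hqabs).mul_right ((1 - q) ^ a)).congr fun n => by ring
  have htsum : ∑' n : ℕ, c a n * (1 - q) ^ a * q ^ n = 1 := by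
    calc ∑' n : ℕ, c a n * (1 - q) ^ a * q ^ n
        = ∑' n : ℕ, (1 - q) ^ a * (c a n * q ^ n) := tsum_congr fun n => by ring
      _ = (1 - q) ^ a * ∑' n : ℕ, c a n * q ^ n := tsum_mul_left
      _ = 1 := by rw [mul_comm]; exact hq_eq
  exact (Summable.hasSum_iff hsummable).2 htsum

end

lemma tail_ratio {p : ℕ → ℝ} {L : ℝ} (hpos : ∀ n, 0 < p n) (hsum : Summable p)
    (hL0 : 0 < L)
    (hratio : Tendsto (fun k => p (k + 1) / p k) atTop (𝓝 L)) :
    Tendsto (fun n => (∑' m, p (m + (n + 1))) / (∑' m, p (m + n))) atTop (𝓝 L) := by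
  have hTs : ∀ n : ℕ, Summable (fun m => p (m + n)) :=
    fun n => (summable_nat_add_iff n).2 hsum
  have hTpos : ∀ n : ℕ, 0 < ∑' m, p (m + n) :=
    fun n => Summable.tsum_pos (hTs n) (fun m => (hpos _).le) 0 (hpos _)
  rw [Metric.tendsto_atTop]
  intro ε hε
  set δ : ℝ := min (ε / 2) (L / 2) with hδdef
  have hδ0 : 0 < δ := lt_min (by linarith) (by linarith)
  have hδε : δ < ε := lt_of_le_of_lt (min_le_left _ _) (by linarith)
  have hδL : δ < L := lt_of_le_of_lt (min_le_right _ _) (by linarith)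
  obtain ⟨N, hN⟩ := (Metric.tendsto_atTop.1 hratio) δ hδ0
  refine ⟨N, fun n hn => ?_⟩
  have hub : ∀ k, N ≤ k → p (k + 1) ≤ (L + δ) * p k := by
    intro k hk
    have h1 := hN k hk
    rw [Real.dist_eq, abs_lt] at h1
    have hpk := hpos k
    have h2 := (div_lt_iff₀ hpk).1 (by linarith [h1.2] : p (k + 1) / p k < L + δ)
    linarith
  have hlb : ∀ k, N ≤ k → (L - δ) * p k ≤ p (k + 1) := by
    intro k hk
    have h1 := hN k hk
    rw [Real.dist_eq, abs_lt] at h1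
    have hpk := hpos k
    have h2 := (lt_div_iff₀ hpk).1 (by linarith [h1.1] : L - δ < p (k + 1) / p k)
    linarith
  have hub' : (∑' m, p (m + (n + 1))) ≤ (L + δ) * ∑' m, p (m + n) := by
    rw [← tsum_mul_left]
    refine Summable.tsum_le_tsum (fun m => ?_) (hTs (n + 1)) ((hTs n).mul_left _)
    have hmn : m + (n + 1) = (m + n) + 1 := by omega
    rw [hmn]
    exact hub (m + n) (le_trans hn (Nat.le_add_left n m))
  have hlb' : (L - δ) * (∑' m, p (m + n)) ≤ ∑' m, p (m + (n + 1)) := by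
    rw [← tsum_mul_left]
    refine Summable.tsum_le_tsum (fun m => ?_) ((hTs n).mul_left _) (hTs (n + 1))
    have hmn : m + (n + 1) = (m + n) + 1 := by omega
    rw [hmn]
    exact hlb (m + n) (le_trans hn (Nat.le_add_left n m))
  have hT := hTpos n
  have h1 : (∑' m, p (m + (n + 1))) / (∑' m, p (m + n)) ≤ L + δ := (div_le_iff₀ hT).2 hub'
  have h2 : L - δ ≤ (∑' m, p (m + (n + 1))) / (∑' m, p (m + n)) := (le_div_iff₀ hT).2 hlb'
  rw [Real.dist_eq]
  have h3 : |(∑' m, p (m + (n + 1))) / (∑' m, p (m + n)) - L| ≤ δ :=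
    abs_le.2 ⟨by linarith, by linarith⟩
  linarith

end NegBinAux


open NegBinAux in
/-- The negative binomial distribution is pseudo-Gumbel: the ratio of consecutive tails
converges to `1/(1+b) ∈ (0,1)`, so it is not long tailed. -/
theorem negative_binomial_pseudo_gumbel
    (a b : ℝ) (ha : 0 < a) (hb : 0 < b)
    (p : ℕ → ℝ) (F : ℕ → ℝ)
    (hp : ∀ n, p n = (Real.Gamma (a + n) / (Real.Gamma a * Nat.factorial n))
            * (b / (b + 1)) ^ a * (1 / (b + 1)) ^ n)
    (hF : ∀ n, F n = ∑ m ∈ Finset.range (n + 1), p m) :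
    Tendsto (fun n => (1 - F (n + 1)) / (1 - F n)) atTop (nhds (1 / (1 + b))) ∧
    (1 / (1 + b)) ∈ Set.Ioo (0:ℝ) 1 ∧
    ¬ Tendsto (fun n => (1 - F (n + 1)) / (1 - F n)) atTop (nhds 1) := by
  set q : ℝ := 1 / (b + 1) with hqdef
  have hb1 : 0 < b + 1 := by linarith
  have hq0 : 0 < q := by rw [hqdef]; positivity
  have hq1 : q < 1 := by
    rw [hqdef, div_lt_one hb1]; linarith
  have h1q : 1 - q = b / (b + 1) := by
    rw [hqdef]; field_simp; ring
  have hpc : ∀ n, p n = c a n * (1 - q) ^ a * q ^ n := by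
    intro n
    rw [hp n, h1q, hqdef, c]
  have hS : HasSum p 1 := by
    have := hasSum_one ha hq0.le hq1
    exact this.congr_fun fun n => hpc n
  have hpos : ∀ n, 0 < p n := by
    intro n
    rw [hpc n]
    have h1 : 0 < 1 - q := by linarith
    exact mul_pos (mul_pos (c_pos ha n) (Real.rpow_pos_of_pos h1 a)) (by positivity)
  have hsumm : Summable p := hS.summable
  have hratio : Tendsto (fun k => p (k + 1) / p k) atTop (𝓝 q) := by
    have h0 := (tend_aux a).const_mul q
    rw [mul_one] at h0
    refine h0.congr fun k => ?_
    have hk1 : ((k:ℝ) + 1) ≠ 0 := by positivity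
    have hstep : p (k + 1) = (q * ((a + k) / (k + 1))) * p k := by
      rw [hpc, hpc]
      have h := c_succ ha k
      have hA : ((1:ℝ) - q) ^ a ≠ 0 := (Real.rpow_pos_of_pos (by linarith) a).ne'
      rw [show c a (k + 1) = (a + k) * c a k / (k + 1) from (eq_div_iff hk1).2 (by linarith [h])]
      ring
    rw [hstep, mul_div_assoc, div_self (hpos k).ne', mul_one]
  have htail : ∀ n, 1 - F n = ∑' m, p (m + (n + 1)) := by
    intro n
    have h2 := Summable.sum_add_tsum_nat_add (f := p) (n + 1) hsumm
    rw [hS.tsum_eq] at h2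
    rw [hF]
    linarith
  have hmain : Tendsto (fun n => (1 - F (n + 1)) / (1 - F n)) atTop (𝓝 (1 / (1 + b))) := by
    have H := (tail_ratio hpos hsumm hq0 hratio).comp (tendsto_add_atTop_nat 1)
    have hq' : q = 1 / (1 + b) := by rw [hqdef, add_comm]
    rw [← hq']
    refine H.congr fun n => ?_
    simp only [Function.comp_apply]
    rw [htail n, htail (n + 1)]
  have hIoo : (1 / (1 + b)) ∈ Set.Ioo (0:ℝ) 1 := by
    constructor
    · positivity
    · rw [div_lt_one (by linarith)]; linarith
  refine ⟨hmain, hIoo, fun hcon => ?_⟩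
  have := tendsto_nhds_unique hcon hmain
  have := hIoo.2
  linarith [this]
end

section
/- Let f be a gamma-type density with parameters α ∈ ℝ, β > 0 and slowly varying positive C, and let F̄ be its survival function. Then the hazard ratio f(x)/F̄(x) converges to β as x → ∞. -/
open Filter Real MeasureTheory

private lemma overlap_aux {A B : Set ℝ} (hA : MeasurableSet A) (hB : MeasurableSet B)
    (hAs : A ⊆ Set.Icc 1 4) (hBs : B ⊆ Set.Icc 1 4)
    (h : ENNReal.ofReal 3 < volume A + volume B) : (A ∩ B).Nonempty := by
  by_contra hc
  rw [Set.not_nonempty_iff_eq_empty] at hc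
  have hdisj : Disjoint A B := Set.disjoint_iff_inter_eq_empty.mpr hc
  have h1 : volume A + volume B = volume (A ∪ B) := (measure_union hdisj hB).symm
  have h2 : volume (A ∪ B) ≤ volume (Set.Icc (1:ℝ) 4) :=
    measure_mono (Set.union_subset hAs hBs)
  rw [Real.volume_Icc] at h2
  norm_num at h2
  norm_num at h
  exact absurd (h.trans_le (h1.le.trans h2)) (lt_irrefl _)

private lemma integral_exp_decay (x b : ℝ) (hb : 0 < b) :
    ∫ t in Set.Ioi x, Real.exp (-b*t) = b⁻¹ * Real.exp (-b*x) := by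
  have hfun : (fun t => Real.exp (-b*t)) = (fun t => Real.exp (-(t*b))) := by
    funext t; rw [neg_mul, mul_comm]
  have h := integral_comp_mul_right_Ioi (fun u => Real.exp (-u)) x hb
  simp only [smul_eq_mul] at h
  rw [hfun, h, integral_exp_neg_Ioi]
  rw [neg_mul, mul_comm x b]

private lemma uct (D : ℝ → ℝ) (hD : AEStronglyMeasurable D (volume : Measure ℝ))
    (hpos : ∀ᶠ x in atTop, 0 < D x)
    (hsv : ∀ l : ℝ, 0 < l → Tendsto (fun t => D (t * l) / D t) atTop (nhds 1)) :
    ∀ ε : ℝ, 0 < ε → ∃ X : ℝ, ∀ x ≥ X, ∀ l ∈ Set.Icc (1:ℝ) 2, |D (x * l) / D x - 1| ≤ ε := by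
  by_contra hcon
  push_neg at hcon
  obtain ⟨ε, hε, hXall⟩ := hcon
  have hseq : ∀ n : ℕ, ∃ x : ℝ, (n:ℝ) + 1 ≤ x ∧ ∃ l ∈ Set.Icc (1:ℝ) 2,
      ε < |D (x * l) / D x - 1| := by
    intro n
    obtain ⟨x, hx, l, hl, hgt⟩ := hXall ((n:ℝ)+1)
    exact ⟨x, hx, l, hl, hgt⟩
  choose x hxge l hl hgt using hseq
  have hx1 : ∀ n, (1:ℝ) ≤ x n := fun n => le_trans (le_add_of_nonneg_left (Nat.cast_nonneg n)) (hxge n)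
  have hl1 : ∀ n, (1:ℝ) ≤ l n := fun n => (hl n).1
  have hl2 : ∀ n, l n ≤ (2:ℝ) := fun n => (hl n).2
  have hlpos : ∀ n, (0:ℝ) < l n := fun n => lt_of_lt_of_le one_pos (hl1 n)
  have hxpos : ∀ n, (0:ℝ) < x n := fun n => lt_of_lt_of_le one_pos (hx1 n)
  have hxtop : Tendsto x atTop atTop := by
    apply tendsto_atTop_mono (fun n => ((le_add_iff_nonneg_right _).mpr zero_le_one).trans (hxge n))
    exact tendsto_natCast_atTop_atTop
  -- y sequence
  set y : ℕ → ℝ := fun n => x n * l n with hy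
  have hyx : ∀ n, x n ≤ y n := fun n => le_mul_of_one_le_right (hxpos n).le (hl1 n)
  have hytop : Tendsto y atTop atTop := tendsto_atTop_mono hyx hxtop
  have hypos : ∀ n, (0:ℝ) < y n := fun n => lt_of_lt_of_le (hxpos n) (hyx n)
  -- measurable representative
  have hD'meas : StronglyMeasurable (hD.mk D) := hD.stronglyMeasurable_mk
  set D' := hD.mk D with hD'def
  have hnull : volume {a : ℝ | ¬ D a = D' a} = 0 := hD.ae_eq_mk
  obtain ⟨N, hNsub, hNmeas, hNnull⟩ := exists_measurable_superset_of_null hnull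
  have hDeq : ∀ a, a ∉ N → D a = D' a := by
    intro a ha
    by_contra hne
    exact ha (hNsub hne)
  -- big null set
  set NN : Set ℝ := (⋃ n, (fun t => x n * t) ⁻¹' N) ∪ (⋃ n, (fun t => y n * t) ⁻¹' N) with hNN
  have hNNmeas : MeasurableSet NN := by
    apply MeasurableSet.union <;>
      exact MeasurableSet.iUnion (fun n => hNmeas.preimage (measurable_const_mul _))
  have hNNnull : volume NN = 0 := by
    apply measure_union_null <;>
    · apply measure_iUnion_null
      intro n
      first
      | (rw [Real.volume_preimage_mul_left (ne_of_gt (hxpos n)), hNnull, mul_zero])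
      | (rw [Real.volume_preimage_mul_left (ne_of_gt (hypos n)), hNnull, mul_zero])
  have hNNx : ∀ t, t ∉ NN → ∀ n, x n * t ∉ N := by
    intro t ht n hmem
    exact ht (Set.mem_union_left _ (Set.mem_iUnion.mpr ⟨n, hmem⟩))
  have hNNy : ∀ t, t ∉ NN → ∀ n, y n * t ∉ N := by
    intro t ht n hmem
    exact ht (Set.mem_union_right _ (Set.mem_iUnion.mpr ⟨n, hmem⟩))
  -- Egorov helper
  have egorov : ∀ z : ℕ → ℝ, Tendsto z atTop atTop →
      (∀ t : ℝ, t ∉ NN → ∀ n, z n * t ∉ N) → ∀ c : ℝ, 1 ≤ c →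
      ∃ E : Set ℝ, MeasurableSet E ∧ E ⊆ Set.Icc 1 c ∧ (∀ t ∈ E, t ∉ NN) ∧
        ENNReal.ofReal (c - 5/4) ≤ volume E ∧
        TendstoUniformlyOn (fun n t => D' (z n * t) / D (z n) - 1) (fun _ => (0:ℝ)) atTop E := by
    intro z hz hzN c hc
    set G : ℕ → ℝ → ℝ := fun n t => D' (z n * t) / D (z n) - 1 with hG
    have hGmeas : ∀ n, StronglyMeasurable (G n) := by
      intro n
      apply Measurable.stronglyMeasurable
      apply Measurable.sub _ measurable_const
      exact (hD'meas.measurable.comp (measurable_const_mul _)).div_const _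
    have hconv : ∀ᵐ t : ℝ, t ∈ Set.Icc (1:ℝ) c → Tendsto (fun n => G n t) atTop (nhds 0) := by
      have hNNae : ∀ᵐ t : ℝ, t ∉ NN := measure_eq_zero_iff_ae_notMem.mp hNNnull
      filter_upwards [hNNae] with t ht hmem
      have ht0 : (0:ℝ) < t := lt_of_lt_of_le one_pos hmem.1
      have h1 : Tendsto (fun n => D (z n * t) / D (z n)) atTop (nhds 1) := (hsv t ht0).comp hz
      have h2 : Tendsto (fun n => D (z n * t) / D (z n) - 1) atTop (nhds 0) := by
        simpa using h1.sub_const 1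
      apply h2.congr
      intro n
      have : D (z n * t) = D' (z n * t) := hDeq _ (hzN t ht n)
      simp [hG, this]
    obtain ⟨T, hTsub, hTmeas, hTle, hTunif⟩ :=
      tendstoUniformlyOn_of_ae_tendsto (μ := volume) hGmeas stronglyMeasurable_const
        measurableSet_Icc (by simp [Real.volume_Icc]) hconv (by norm_num : (0:ℝ) < 1/4)
    refine ⟨(Set.Icc 1 c \ T) \ NN, (measurableSet_Icc.diff hTmeas).diff hNNmeas,
      fun t ht => ht.1.1, fun t ht => ht.2, ?_, hTunif.mono Set.diff_subset⟩
    have hcover : Set.Icc (1:ℝ) c ⊆ ((Set.Icc 1 c \ T) \ NN) ∪ T ∪ NN := by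
      intro t ht
      by_cases h1 : t ∈ NN
      · exact Set.mem_union_right _ h1
      by_cases h2 : t ∈ T
      · exact Set.mem_union_left _ (Set.mem_union_right _ h2)
      · exact Set.mem_union_left _ (Set.mem_union_left _ ⟨⟨ht, h2⟩, h1⟩)
    have hm : ENNReal.ofReal (c - 1) ≤ volume ((Set.Icc 1 c \ T) \ NN) + ENNReal.ofReal (1/4) := by
      calc ENNReal.ofReal (c - 1) = volume (Set.Icc (1:ℝ) c) := by rw [Real.volume_Icc]
        _ ≤ volume (((Set.Icc 1 c \ T) \ NN) ∪ T ∪ NN) := measure_mono hcover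
        _ ≤ volume (((Set.Icc 1 c \ T) \ NN) ∪ T) + volume NN := measure_union_le _ _
        _ = volume (((Set.Icc 1 c \ T) \ NN) ∪ T) := by rw [hNNnull, add_zero]
        _ ≤ volume ((Set.Icc 1 c \ T) \ NN) + volume T := measure_union_le _ _
        _ ≤ _ := add_le_add le_rfl hTle
    have : ENNReal.ofReal (c - 1) - ENNReal.ofReal (1/4) ≤ volume ((Set.Icc 1 c \ T) \ NN) :=
      tsub_le_iff_right.mpr hm
    calc ENNReal.ofReal (c - 5/4) = ENNReal.ofReal ((c-1) - 1/4) := by congr 1; ring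
      _ = ENNReal.ofReal (c - 1) - ENNReal.ofReal (1/4) := ENNReal.ofReal_sub _ (by norm_num)
      _ ≤ _ := this
  obtain ⟨E₁, hE₁meas, hE₁sub, hE₁nn, hE₁vol, hE₁unif⟩ := egorov x hxtop hNNx 4 (by norm_num)
  obtain ⟨E₂, hE₂meas, hE₂sub, hE₂nn, hE₂vol, hE₂unif⟩ := egorov y hytop hNNy 2 (by norm_num)
  -- overlap
  have hov : ∀ n : ℕ, ∃ v : ℝ, v ∈ E₁ ∩ (fun u => u * (l n)⁻¹) ⁻¹' E₂ := by
    intro n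
    have hlinv : (l n)⁻¹ * l n = 1 := inv_mul_cancel₀ (ne_of_gt (hlpos n))
    apply overlap_aux hE₁meas (hE₂meas.preimage (measurable_mul_const _))
      (fun t ht => Set.Icc_subset_Icc_right (by norm_num) (hE₁sub ht))
    · intro u hu
      have h1 := (hE₂sub hu).1
      have h2 := (hE₂sub hu).2
      constructor
      · nlinarith [hl1 n, hl2 n, hlpos n]
      · nlinarith [hl1 n, hl2 n, hlpos n]
    · have hB : ENNReal.ofReal (3/4) ≤ volume ((fun u => u * (l n)⁻¹) ⁻¹' E₂) := by
        rw [Real.volume_preimage_mul_right (inv_ne_zero (ne_of_gt (hlpos n)))]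
        rw [inv_inv, abs_of_pos (hlpos n)]
        calc ENNReal.ofReal (3/4) = 1 * ENNReal.ofReal (3/4) := (one_mul _).symm
          _ ≤ ENNReal.ofReal (l n) * volume E₂ := by
              apply mul_le_mul'
              · rw [← ENNReal.ofReal_one]
                exact ENNReal.ofReal_le_ofReal (hl1 n)
              · calc ENNReal.ofReal (3/4) = ENNReal.ofReal (2 - 5/4) := by norm_num
                  _ ≤ volume E₂ := hE₂vol
      calc ENNReal.ofReal 3 < ENNReal.ofReal (11/4) + ENNReal.ofReal (3/4) := by
            rw [← ENNReal.ofReal_add (by norm_num) (by norm_num)]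
            exact ENNReal.ofReal_lt_ofReal_iff (by norm_num) |>.mpr (by norm_num)
        _ ≤ volume E₁ + volume ((fun u => u * (l n)⁻¹) ⁻¹' E₂) := by
            apply add_le_add _ hB
            calc ENNReal.ofReal (11/4) = ENNReal.ofReal (4 - 5/4) := by norm_num
              _ ≤ volume E₁ := hE₁vol
  choose v hv using hov
  have hvE₁ : ∀ n, v n ∈ E₁ := fun n => (hv n).1
  have hvE₂ : ∀ n, v n * (l n)⁻¹ ∈ E₂ := fun n => (hv n).2
  have hv1 : ∀ n, (1:ℝ) ≤ v n := fun n => (hE₁sub (hvE₁ n)).1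
  -- the two sequence limits
  have hu : Tendsto (fun n => D (x n * v n) / D (x n)) atTop (nhds 1) := by
    have huni := Metric.tendstoUniformlyOn_iff.mp hE₁unif
    rw [Metric.tendsto_atTop]
    intro δ hδ
    obtain ⟨M, hM⟩ := eventually_atTop.mp (huni δ hδ)
    refine ⟨M, fun n hn => ?_⟩
    have := hM n hn (v n) (hvE₁ n)
    have heq : D (x n * v n) = D' (x n * v n) := hDeq _ (hNNx (v n) (hE₁nn _ (hvE₁ n)) n)
    rw [Real.dist_eq] at this ⊢
    rw [heq]
    have h0 : |(0:ℝ) - (D' (x n * v n) / D (x n) - 1)| = |D' (x n * v n) / D (x n) - 1| := by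
      rw [zero_sub, abs_neg]
    calc |D' (x n * v n) / D (x n) - 1| = |(0:ℝ) - (D' (x n * v n) / D (x n) - 1)| := h0.symm
      _ < δ := this
  have hw : Tendsto (fun n => D (x n * v n) / D (y n)) atTop (nhds 1) := by
    have huni := Metric.tendstoUniformlyOn_iff.mp hE₂unif
    rw [Metric.tendsto_atTop]
    intro δ hδ
    obtain ⟨M, hM⟩ := eventually_atTop.mp (huni δ hδ)
    refine ⟨M, fun n hn => ?_⟩
    have := hM n hn (v n * (l n)⁻¹) (hvE₂ n)
    have hl0 : l n ≠ 0 := ne_of_gt (hlpos n)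
    have harg : y n * (v n * (l n)⁻¹) = x n * v n := by
      simp only [hy]
      field_simp
    rw [harg] at this
    have heq : D (x n * v n) = D' (x n * v n) := by
      apply hDeq
      have := hNNy (v n * (l n)⁻¹) (hE₂nn _ (hvE₂ n)) n
      rwa [harg] at this
    rw [Real.dist_eq] at this ⊢
    rw [heq]
    rw [zero_sub, abs_neg] at this
    exact this
  have hQ : Tendsto (fun n => (D (x n * v n) / D (x n)) / (D (x n * v n) / D (y n)))
      atTop (nhds 1) := by
    simpa [Pi.div_def] using hu.div hw one_ne_zero
  -- eventual equality
  obtain ⟨X₀, hX₀⟩ := eventually_atTop.mp hpos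
  have hev : ∀ᶠ n in atTop, D (x n * l n) / D (x n)
      = (D (x n * v n) / D (x n)) / (D (x n * v n) / D (y n)) := by
    filter_upwards [hxtop.eventually_ge_atTop X₀] with n hn
    have hDx : 0 < D (x n) := hX₀ _ hn
    have hDy : 0 < D (y n) := hX₀ _ (le_trans hn (hyx n))
    have hDxv : 0 < D (x n * v n) :=
      hX₀ _ (le_trans hn (le_mul_of_one_le_right (hxpos n).le (hv1 n)))
    have key : ∀ a b c : ℝ, a ≠ 0 → b ≠ 0 → c ≠ 0 → c/b = (a/b)/(a/c) := by
      intro a b c ha hb hc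
      field_simp
    show D (y n) / D (x n) = _
    exact key _ _ _ (ne_of_gt hDxv) (ne_of_gt hDx) (ne_of_gt hDy)
  have hfin : Tendsto (fun n => D (x n * l n) / D (x n)) atTop (nhds 1) :=
    Tendsto.congr' (Filter.EventuallyEq.symm hev) hQ
  have hcl : ∀ᶠ n in atTop, dist (D (x n * l n) / D (x n)) 1 < ε :=
    Metric.tendsto_nhds.mp hfin ε hε
  obtain ⟨n, hn⟩ := hcl.exists
  rw [Real.dist_eq] at hn
  exact absurd hn (not_lt.mpr (hgt n).le)

private lemma chain_pow (D : ℝ → ℝ) (ε X : ℝ) (hε : 0 < ε) (hε2 : ε ≤ 1/2) (hX : 1 ≤ X)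
    (hpos : ∀ x ≥ X, 0 < D x)
    (h : ∀ x ≥ X, ∀ l ∈ Set.Icc (1:ℝ) 2, |D (x*l)/D x - 1| ≤ ε) :
    ∀ k : ℕ, ∀ x ≥ X, ∀ t, x ≤ t → t ≤ 2^k * x →
      (1-ε)^k * D x ≤ D t ∧ D t ≤ (1+ε)^k * D x := by
  have hbase : ∀ x ≥ X, ∀ t, x ≤ t → t ≤ 2 * x → (1-ε) * D x ≤ D t ∧ D t ≤ (1+ε) * D x := by
    intro x hx t hxt ht2
    have hx0 : (0:ℝ) < x := lt_of_lt_of_le one_pos (hX.trans hx)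
    have hl : t/x ∈ Set.Icc (1:ℝ) 2 := by
      constructor
      · rw [le_div_iff₀ hx0]; linarith
      · rw [div_le_iff₀ hx0]; linarith
    have := h x hx (t/x) hl
    rw [mul_div_cancel₀ _ (ne_of_gt hx0)] at this
    have hDx := hpos x hx
    rw [abs_le] at this
    constructor
    · have h1 : (1-ε) ≤ D t / D x := by linarith [this.1]
      calc (1-ε) * D x ≤ (D t / D x) * D x := mul_le_mul_of_nonneg_right h1 hDx.le
        _ = D t := div_mul_cancel₀ _ (ne_of_gt hDx)
    · have h1 : D t / D x ≤ (1+ε) := by linarith [this.2]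
      calc D t = (D t / D x) * D x := (div_mul_cancel₀ _ (ne_of_gt hDx)).symm
        _ ≤ (1+ε) * D x := mul_le_mul_of_nonneg_right h1 hDx.le
  intro k
  induction k with
  | zero =>
    intro x hx t hxt ht
    rw [pow_zero, one_mul] at ht
    have : t = x := le_antisymm ht hxt
    subst this
    simp
  | succ k ih =>
    intro x hx t hxt ht
    by_cases hle : t ≤ 2 * x
    · obtain ⟨hlo, hhi⟩ := hbase x hx t hxt hle
      have hDx := hpos x hx
      constructor
      · calc (1-ε)^(k+1) * D x ≤ (1-ε) * D x := by
              apply mul_le_mul_of_nonneg_right _ hDx.le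
              apply pow_le_of_le_one (by linarith) (by linarith) (Nat.succ_ne_zero k)
          _ ≤ D t := hlo
      · calc D t ≤ (1+ε) * D x := hhi
          _ ≤ (1+ε)^(k+1) * D x := by
              apply mul_le_mul_of_nonneg_right _ hDx.le
              exact le_self_pow₀ (by linarith) (Nat.succ_ne_zero k)
    · push_neg at hle
      have hx0 : (0:ℝ) < x := lt_of_lt_of_le one_pos (hX.trans hx)
      have h2 : x ≤ t/2 := by linarith
      have h2X : X ≤ t/2 := hx.trans h2
      have h2k : t/2 ≤ 2^k * x := by
        rw [pow_succ] at ht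
        linarith
      obtain ⟨ihlo, ihhi⟩ := ih x hx (t/2) h2 h2k
      have hstep := hbase (t/2) h2X t (by linarith) (by linarith)
      have hDt2 := hpos (t/2) h2X
      constructor
      · calc (1-ε)^(k+1) * D x = (1-ε) * ((1-ε)^k * D x) := by ring
          _ ≤ (1-ε) * D (t/2) := mul_le_mul_of_nonneg_left ihlo (by linarith)
          _ ≤ D t := hstep.1
      · calc D t ≤ (1+ε) * D (t/2) := hstep.2
          _ ≤ (1+ε) * ((1+ε)^k * D x) := mul_le_mul_of_nonneg_left ihhi (by linarith)
          _ = (1+ε)^(k+1) * D x := by ring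

private lemma chain (D : ℝ → ℝ) (ε X : ℝ) (hε : 0 < ε) (hε2 : ε ≤ 1/2) (hX : 1 ≤ X)
    (hpos : ∀ x ≥ X, 0 < D x)
    (h : ∀ x ≥ X, ∀ l ∈ Set.Icc (1:ℝ) 2, |D (x*l)/D x - 1| ≤ ε) :
    ∀ x ≥ X, ∀ t, x ≤ t →
      (1-ε) * Real.exp (-(4*ε) * ((t-x)/x)) * D x ≤ D t ∧
      D t ≤ (1+ε) * Real.exp ((2*ε) * ((t-x)/x)) * D x := by
  intro x hx t hxt
  have hx0 : (0:ℝ) < x := lt_of_lt_of_le one_pos (hX.trans hx)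
  have ht0 : (0:ℝ) < t := lt_of_lt_of_le hx0 hxt
  have htx1 : (1:ℝ) ≤ t/x := (le_div_iff₀ hx0).mpr (by linarith)
  have hlog0 : 0 ≤ Real.log (t/x) := Real.log_nonneg htx1
  have hlogle : Real.log (t/x) ≤ (t-x)/x := by
    have := Real.log_le_sub_one_of_pos (show (0:ℝ) < t/x by linarith)
    have heq : t/x - 1 = (t-x)/x := by field_simp
    linarith [heq ▸ this]
  set q : ℝ := Real.log (t/x) / Real.log 2 with hq
  have hlog2 : (0:ℝ) < Real.log 2 := Real.log_pos (by norm_num)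
  have hq0 : 0 ≤ q := div_nonneg hlog0 hlog2.le
  have hqle : q ≤ 2 * ((t-x)/x) := by
    rw [hq, div_le_iff₀ hlog2]
    have h12 : (1:ℝ)/2 ≤ Real.log 2 := by
      have := Real.log_two_gt_d9
      linarith
    nlinarith [hlogle, sub_nonneg.mpr hxt, hx0]
  set k : ℕ := ⌊q⌋₊ + 1 with hk
  have hqk : q < (k:ℕ) := by
    rw [hk]
    push_cast
    exact Nat.lt_floor_add_one q
  have h2k : t ≤ 2^k * x := by
    have hexp : t/x ≤ (2:ℝ)^k := by
      calc t/x = Real.exp (Real.log (t/x)) := (Real.exp_log (by linarith)).symm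
        _ ≤ Real.exp ((k:ℝ) * Real.log 2) := by
            apply Real.exp_le_exp.mpr
            rw [hq] at hqk
            exact (div_le_iff₀ hlog2).mp hqk.le
        _ = (2:ℝ)^k := by
            rw [← Real.rpow_natCast (2:ℝ) k, Real.rpow_def_of_pos (by norm_num)]
            ring_nf
    calc t = (t/x) * x := (div_mul_cancel₀ _ (ne_of_gt hx0)).symm
      _ ≤ 2^k * x := mul_le_mul_of_nonneg_right hexp hx0.le
  obtain ⟨hlo, hhi⟩ := chain_pow D ε X hε hε2 hX hpos h k x hx t hxt h2k
  have hfloorq : (⌊q⌋₊ : ℝ) ≤ q := Nat.floor_le hq0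
  have hDx := hpos x hx
  constructor
  · -- lower bound
    have hpow : (1-ε) * Real.exp (-(4*ε) * ((t-x)/x)) ≤ (1-ε)^k := by
      have hrep : (1-ε)^k = (1-ε) * Real.exp ((⌊q⌋₊:ℝ) * Real.log (1-ε)) := by
        rw [hk, pow_succ']
        congr 1
        rw [← Real.rpow_natCast (1-ε) ⌊q⌋₊, Real.rpow_def_of_pos (by linarith)]
        ring_nf
      rw [hrep]
      apply mul_le_mul_of_nonneg_left _ (by linarith)
      apply Real.exp_le_exp.mpr
      have hlogeps : -(2*ε) ≤ Real.log (1-ε) := by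
        have hinv : Real.log (1-ε) = - Real.log (1-ε)⁻¹ := by
          rw [Real.log_inv]; ring
        have hle : Real.log (1-ε)⁻¹ ≤ (1-ε)⁻¹ - 1 :=
          Real.log_le_sub_one_of_pos (inv_pos.mpr (by linarith : (0:ℝ) < 1 - ε))
        have hb : (1-ε)⁻¹ - 1 ≤ 2*ε := by
          rw [inv_eq_one_div, div_sub' (by linarith : (1:ℝ)-ε ≠ 0)]
          rw [div_le_iff₀ (by linarith : (0:ℝ) < 1-ε)]
          nlinarith
        rw [hinv]
        linarith
      have hlogneg : Real.log (1-ε) ≤ 0 :=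
        Real.log_nonpos (by linarith) (by linarith)
      -- -(4ε) * ((t-x)/x) ≤ ⌊q⌋₊ * log(1-ε)
      calc -(4*ε) * ((t-x)/x) = (2 * ((t-x)/x)) * (-(2*ε)) := by ring
        _ ≤ (2 * ((t-x)/x)) * Real.log (1-ε) := by
            apply mul_le_mul_of_nonneg_left hlogeps
            have : 0 ≤ (t-x)/x := div_nonneg (by linarith) hx0.le
            linarith
        _ ≤ (⌊q⌋₊:ℝ) * Real.log (1-ε) := by
            apply mul_le_mul_of_nonpos_right _ hlogneg
            exact hfloorq.trans hqle
    calc (1-ε) * Real.exp (-(4*ε) * ((t-x)/x)) * D x ≤ (1-ε)^k * D x :=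
          mul_le_mul_of_nonneg_right hpow hDx.le
      _ ≤ D t := hlo
  · -- upper bound
    have hpow : (1+ε)^k ≤ (1+ε) * Real.exp ((2*ε) * ((t-x)/x)) := by
      have hrep : (1+ε)^k = (1+ε) * Real.exp ((⌊q⌋₊:ℝ) * Real.log (1+ε)) := by
        rw [hk, pow_succ']
        congr 1
        rw [← Real.rpow_natCast (1+ε) ⌊q⌋₊, Real.rpow_def_of_pos (by linarith)]
        ring_nf
      rw [hrep]
      apply mul_le_mul_of_nonneg_left _ (by linarith)
      apply Real.exp_le_exp.mpr
      have hlogeps : Real.log (1+ε) ≤ ε := by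
        have := Real.log_le_sub_one_of_pos (by linarith : (0:ℝ) < 1+ε)
        linarith
      have hlogpos : 0 ≤ Real.log (1+ε) := Real.log_nonneg (by linarith)
      calc (⌊q⌋₊:ℝ) * Real.log (1+ε) ≤ (2 * ((t-x)/x)) * Real.log (1+ε) := by
            apply mul_le_mul_of_nonneg_right (hfloorq.trans hqle) hlogpos
        _ ≤ (2 * ((t-x)/x)) * ε := by
            apply mul_le_mul_of_nonneg_left hlogeps
            have : 0 ≤ (t-x)/x := div_nonneg (by linarith) hx0.le
            linarith
        _ = (2*ε) * ((t-x)/x) := by ring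
    calc D t ≤ (1+ε)^k * D x := hhi
      _ ≤ (1+ε) * Real.exp ((2*ε) * ((t-x)/x)) * D x :=
          mul_le_mul_of_nonneg_right hpow hDx.le

private lemma key_bounds (f D : ℝ → ℝ) (α β ε : ℝ) (hβ : 0 < β) (hε : 0 < ε) (hε2 : ε ≤ 1/2)
    (hf_int : Integrable f) (hf_nonneg : ∀ x, 0 ≤ f x)
    (hfD : ∀ t : ℝ, 0 < t → f t = D t * (t ^ α * Real.exp (-β * t)))
    (hpos : ∀ᶠ x in atTop, 0 < D x)
    (huct : ∃ X : ℝ, ∀ x ≥ X, ∀ l ∈ Set.Icc (1:ℝ) 2, |D (x * l) / D x - 1| ≤ ε) :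
    ∀ᶠ x in atTop, 0 < f x ∧
      (1-ε) * (β + (4*ε+|α|)/x)⁻¹ * f x ≤ (∫ t in Set.Ioi x, f t) ∧
      (∫ t in Set.Ioi x, f t) ≤ (1+ε) * (β - (2*ε+|α|)/x)⁻¹ * f x := by
  obtain ⟨X₁, hX₁⟩ := huct
  obtain ⟨X₂, hX₂⟩ := eventually_atTop.mp hpos
  set m : ℝ := 2*ε + |α| with hm
  set m' : ℝ := 4*ε + |α| with hm'
  have hm0 : 0 < m := by rw [hm]; positivity
  have hm'0 : 0 < m' := by rw [hm']; positivity
  set Xm : ℝ := max (max X₁ X₂) 1 with hXm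
  have hXm1 : (1:ℝ) ≤ Xm := le_max_right _ _
  have hpos' : ∀ z ≥ Xm, 0 < D z :=
    fun z hz => hX₂ z (le_trans (le_trans (le_max_right X₁ X₂) (le_max_left _ _)) hz)
  have h' : ∀ z ≥ Xm, ∀ l ∈ Set.Icc (1:ℝ) 2, |D (z * l) / D z - 1| ≤ ε :=
    fun z hz => hX₁ z (le_trans (le_trans (le_max_left X₁ X₂) (le_max_left _ _)) hz)
  clear_value m m'
  have hch := chain D ε Xm hε hε2 hXm1 hpos' h'
  clear_value Xm
  filter_upwards [eventually_ge_atTop (max Xm (2*m/β))] with x hx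
  have hxXm : Xm ≤ x := le_trans (le_max_left _ _) hx
  have hx1 : (1:ℝ) ≤ x := le_trans hXm1 hxXm
  have hx0 : (0:ℝ) < x := lt_of_lt_of_le one_pos hx1
  have hDx : 0 < D x := hpos' x hxXm
  have hfx : f x = D x * (x ^ α * Real.exp (-β * x)) := hfD x hx0
  have hfxpos : 0 < f x := by
    rw [hfx]
    have : (0:ℝ) < x ^ α * Real.exp (-β*x) := by positivity
    exact mul_pos hDx this
  set b : ℝ := β - m/x with hb
  have hbpos : 0 < b := by
    have h2m : 2*m/β ≤ x := le_trans (le_max_right _ _) hx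
    rw [hb]
    have : m/x ≤ β/2 := by
      rw [div_le_iff₀ hx0]
      rw [div_le_iff₀ hβ] at h2m
      nlinarith
    linarith
  clear_value b
  set b' : ℝ := β + m'/x with hb'
  have hb'pos : 0 < b' := by
    rw [hb']
    have : 0 ≤ m'/x := by positivity
    linarith
  clear_value b'
  -- pointwise comparison helpers
  have hrpow_ub : ∀ t : ℝ, x ≤ t → t ^ α ≤ x ^ α * Real.exp (|α| * ((t-x)/x)) := by
    intro t ht
    have ht0 : (0:ℝ) < t := lt_of_lt_of_le hx0 ht
    have htx : (0:ℝ) < t/x := by positivity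
    have h1 : t ^ α = x ^ α * (t/x) ^ α := by
      rw [Real.div_rpow ht0.le hx0.le]
      field_simp
    have hlog0 : 0 ≤ Real.log (t/x) := Real.log_nonneg ((le_div_iff₀ hx0).mpr (by linarith))
    have hlogle : Real.log (t/x) ≤ (t-x)/x := by
      have h2 := Real.log_le_sub_one_of_pos htx
      have h3 : t/x - 1 = (t-x)/x := by field_simp
      linarith [h3 ▸ h2]
    have h2 : (t/x) ^ α ≤ Real.exp (|α| * ((t-x)/x)) := by
      rw [Real.rpow_def_of_pos htx]
      apply Real.exp_le_exp.mpr
      calc Real.log (t/x) * α ≤ |Real.log (t/x) * α| := le_abs_self _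
        _ = Real.log (t/x) * |α| := by rw [abs_mul, abs_of_nonneg hlog0]
        _ ≤ ((t-x)/x) * |α| := mul_le_mul_of_nonneg_right hlogle (abs_nonneg α)
        _ = |α| * ((t-x)/x) := by ring
    calc t ^ α = x ^ α * (t/x) ^ α := h1
      _ ≤ x ^ α * Real.exp (|α| * ((t-x)/x)) :=
          mul_le_mul_of_nonneg_left h2 (Real.rpow_nonneg hx0.le α)
  have hrpow_lb : ∀ t : ℝ, x ≤ t → x ^ α * Real.exp (-|α| * ((t-x)/x)) ≤ t ^ α := by
    intro t ht
    have ht0 : (0:ℝ) < t := lt_of_lt_of_le hx0 ht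
    have htx : (0:ℝ) < t/x := by positivity
    have h1 : t ^ α = x ^ α * (t/x) ^ α := by
      rw [Real.div_rpow ht0.le hx0.le]
      field_simp
    have hlog0 : 0 ≤ Real.log (t/x) := Real.log_nonneg ((le_div_iff₀ hx0).mpr (by linarith))
    have hlogle : Real.log (t/x) ≤ (t-x)/x := by
      have h2 := Real.log_le_sub_one_of_pos htx
      have h3 : t/x - 1 = (t-x)/x := by field_simp
      linarith [h3 ▸ h2]
    have h2 : Real.exp (-|α| * ((t-x)/x)) ≤ (t/x) ^ α := by
      rw [Real.rpow_def_of_pos htx]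
      apply Real.exp_le_exp.mpr
      calc -|α| * ((t-x)/x) ≤ -|α| * Real.log (t/x) := by
            apply mul_le_mul_of_nonpos_left hlogle (by simp [abs_nonneg] : -|α| ≤ 0)
        _ = -(Real.log (t/x) * |α|) := by ring
        _ ≤ Real.log (t/x) * α := by
            have : |Real.log (t/x) * α| = Real.log (t/x) * |α| := by
              rw [abs_mul, abs_of_nonneg hlog0]
            linarith [neg_abs_le (Real.log (t/x) * α), this]
    calc x ^ α * Real.exp (-|α| * ((t-x)/x)) ≤ x ^ α * (t/x) ^ α :=
          mul_le_mul_of_nonneg_left h2 (Real.rpow_nonneg hx0.le α)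
      _ = t ^ α := h1.symm
  -- upper pointwise bound
  have hup : ∀ t ∈ Set.Ioi x, f t ≤ ((1+ε) * f x * Real.exp (b*x)) * Real.exp (-b*t) := by
    intro t ht
    rw [Set.mem_Ioi] at ht
    have htx : x ≤ t := ht.le
    have ht0 : (0:ℝ) < t := lt_of_le_of_lt hx0.le ht
    have hDt : D t ≤ (1+ε) * Real.exp ((2*ε) * ((t-x)/x)) * D x := (hch x hxXm t htx).2
    have hDt0 : 0 ≤ D t := by
      have := hf_nonneg t
      rw [hfD t ht0] at this
      by_contra hneg
      push_neg at hneg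
      have hp : (0:ℝ) < t ^ α * Real.exp (-β*t) := by positivity
      nlinarith
    have hexps : Real.exp ((2*ε) * ((t-x)/x)) * Real.exp (|α| * ((t-x)/x)) * Real.exp (-β*t)
        = Real.exp (b*x) * Real.exp (-b*t) * Real.exp (-β*x) := by
      rw [← Real.exp_add, ← Real.exp_add, ← Real.exp_add, ← Real.exp_add]
      congr 1
      rw [hb, hm]
      field_simp
      ring
    calc f t = D t * (t ^ α * Real.exp (-β*t)) := hfD t ht0
      _ ≤ ((1+ε) * Real.exp ((2*ε) * ((t-x)/x)) * D x) * (t ^ α * Real.exp (-β*t)) := by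
          apply mul_le_mul_of_nonneg_right hDt
          positivity
      _ ≤ ((1+ε) * Real.exp ((2*ε) * ((t-x)/x)) * D x)
            * ((x ^ α * Real.exp (|α| * ((t-x)/x))) * Real.exp (-β*t)) := by
          apply mul_le_mul_of_nonneg_left
          · exact mul_le_mul_of_nonneg_right (hrpow_ub t htx) (Real.exp_pos _).le
          · have h1 : (0:ℝ) ≤ 1+ε := by linarith
            have h2 : (0:ℝ) ≤ Real.exp ((2*ε) * ((t-x)/x)) := (Real.exp_pos _).le
            exact mul_nonneg (mul_nonneg h1 h2) hDx.le
      _ = ((1+ε) * D x * x ^ α)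
            * (Real.exp ((2*ε) * ((t-x)/x)) * Real.exp (|α| * ((t-x)/x)) * Real.exp (-β*t)) := by
          ring
      _ = ((1+ε) * D x * x ^ α) * (Real.exp (b*x) * Real.exp (-b*t) * Real.exp (-β*x)) := by
          rw [hexps]
      _ = ((1+ε) * f x * Real.exp (b*x)) * Real.exp (-b*t) := by
          rw [hfx]
          ring
  -- lower pointwise bound
  have hlow : ∀ t ∈ Set.Ioi x, ((1-ε) * f x * Real.exp (b'*x)) * Real.exp (-b'*t) ≤ f t := by
    intro t ht
    rw [Set.mem_Ioi] at ht
    have htx : x ≤ t := ht.le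
    have ht0 : (0:ℝ) < t := lt_of_le_of_lt hx0.le ht
    have hDt : (1-ε) * Real.exp (-(4*ε) * ((t-x)/x)) * D x ≤ D t := (hch x hxXm t htx).1
    have hexps : Real.exp (-(4*ε) * ((t-x)/x)) * Real.exp (-|α| * ((t-x)/x)) * Real.exp (-β*t)
        = Real.exp (b'*x) * Real.exp (-b'*t) * Real.exp (-β*x) := by
      rw [← Real.exp_add, ← Real.exp_add, ← Real.exp_add, ← Real.exp_add]
      congr 1
      rw [hb', hm']
      field_simp
      ring
    calc ((1-ε) * f x * Real.exp (b'*x)) * Real.exp (-b'*t)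
        = ((1-ε) * D x * x ^ α) * (Real.exp (b'*x) * Real.exp (-b'*t) * Real.exp (-β*x)) := by
          rw [hfx]; ring
      _ = ((1-ε) * D x * x ^ α)
            * (Real.exp (-(4*ε) * ((t-x)/x)) * Real.exp (-|α| * ((t-x)/x)) * Real.exp (-β*t)) := by
          rw [hexps]
      _ = ((1-ε) * Real.exp (-(4*ε) * ((t-x)/x)) * D x)
            * ((x ^ α * Real.exp (-|α| * ((t-x)/x))) * Real.exp (-β*t)) := by
          ring
      _ ≤ ((1-ε) * Real.exp (-(4*ε) * ((t-x)/x)) * D x) * (t ^ α * Real.exp (-β*t)) := by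
          apply mul_le_mul_of_nonneg_left
          · exact mul_le_mul_of_nonneg_right (hrpow_lb t htx) (Real.exp_pos _).le
          · have h1 : (0:ℝ) ≤ 1-ε := by linarith
            have h2 : (0:ℝ) ≤ Real.exp (-(4*ε) * ((t-x)/x)) := (Real.exp_pos _).le
            exact mul_nonneg (mul_nonneg h1 h2) hDx.le
      _ ≤ D t * (t ^ α * Real.exp (-β*t)) := by
          apply mul_le_mul_of_nonneg_right hDt
          positivity
      _ = f t := (hfD t ht0).symm
  -- integrability
  have hint_ub : IntegrableOn (fun t => ((1+ε) * f x * Real.exp (b*x)) * Real.exp (-b*t))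
      (Set.Ioi x) := (exp_neg_integrableOn_Ioi x hbpos).const_mul _
  have hint_lb : IntegrableOn (fun t => ((1-ε) * f x * Real.exp (b'*x)) * Real.exp (-b'*t))
      (Set.Ioi x) := (exp_neg_integrableOn_Ioi x hb'pos).const_mul _
  have hfint : IntegrableOn f (Set.Ioi x) := hf_int.integrableOn
  have hIup : (∫ t in Set.Ioi x, f t)
      ≤ ∫ t in Set.Ioi x, ((1+ε) * f x * Real.exp (b*x)) * Real.exp (-b*t) :=
    setIntegral_mono_on hfint hint_ub measurableSet_Ioi hup
  have hIlow : (∫ t in Set.Ioi x, ((1-ε) * f x * Real.exp (b'*x)) * Real.exp (-b'*t))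
      ≤ ∫ t in Set.Ioi x, f t :=
    setIntegral_mono_on hint_lb hfint measurableSet_Ioi hlow
  have hcalc_ub : (∫ t in Set.Ioi x, ((1+ε) * f x * Real.exp (b*x)) * Real.exp (-b*t))
      = (1+ε) * b⁻¹ * f x := by
    rw [MeasureTheory.integral_const_mul, integral_exp_decay x b hbpos]
    have hee : Real.exp (b*x) * Real.exp (-b*x) = 1 := by
      rw [← Real.exp_add]; norm_num
    calc (1+ε) * f x * Real.exp (b*x) * (b⁻¹ * Real.exp (-b*x))
        = ((1+ε) * b⁻¹ * f x) * (Real.exp (b*x) * Real.exp (-b*x)) := by ring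
      _ = (1+ε) * b⁻¹ * f x := by rw [hee, mul_one]
  have hcalc_lb : (∫ t in Set.Ioi x, ((1-ε) * f x * Real.exp (b'*x)) * Real.exp (-b'*t))
      = (1-ε) * b'⁻¹ * f x := by
    rw [MeasureTheory.integral_const_mul, integral_exp_decay x b' hb'pos]
    have hee : Real.exp (b'*x) * Real.exp (-b'*x) = 1 := by
      rw [← Real.exp_add]; norm_num
    calc (1-ε) * f x * Real.exp (b'*x) * (b'⁻¹ * Real.exp (-b'*x))
        = ((1-ε) * b'⁻¹ * f x) * (Real.exp (b'*x) * Real.exp (-b'*x)) := by ring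
      _ = (1-ε) * b'⁻¹ * f x := by rw [hee, mul_one]
  refine ⟨hfxpos, ?_, ?_⟩
  · calc (1-ε) * b'⁻¹ * f x = _ := hcalc_lb.symm
      _ ≤ ∫ t in Set.Ioi x, f t := hIlow
  · calc (∫ t in Set.Ioi x, f t) ≤ _ := hIup
      _ = (1+ε) * b⁻¹ * f x := hcalc_ub

/-- The hazard ratio of a gamma-type density converges to `β`. -/
theorem gammaType_hazard_tendsto
    (f C : ℝ → ℝ) (α β : ℝ) (hβ : 0 < β)
    (hf_nonneg : ∀ x, 0 ≤ f x)
    (hf_supp : ∀ x < 0, f x = 0)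
    (hf_int : Integrable f)
    (hf_prob : ∫ x, f x = 1)
    (hC_pos : ∀ x, 0 < C x)
    (hC_locbdd : ∀ r : ℝ, ∃ M : ℝ, ∀ x ∈ Set.Icc (0:ℝ) r, |C x| ≤ M)
    (hC_SV : ∀ x : ℝ, 0 < x → Tendsto (fun t => C (t * x) / C t) atTop (nhds 1))
    (hGamma : Tendsto (fun x => f x / (C x * x ^ α * Real.exp (-β * x))) atTop (nhds 1)) :
    Tendsto (fun x => f x / ∫ t in Set.Ioi x, f t) atTop (nhds β) := by
  classical
  set D : ℝ → ℝ := fun t => f t / Real.exp (Real.log t * α - β * t) with hD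
  have hdenom : ∀ t : ℝ, 0 < t → Real.exp (Real.log t * α - β * t)
      = t ^ α * Real.exp (-β * t) := by
    intro t ht
    rw [Real.exp_sub, Real.rpow_def_of_pos ht]
    rw [div_eq_mul_inv, ← Real.exp_neg, neg_mul]
  have hfD : ∀ t : ℝ, 0 < t → f t = D t * (t ^ α * Real.exp (-β * t)) := by
    intro t ht
    rw [hD]
    simp only
    rw [hdenom t ht]
    rw [div_mul_cancel₀]
    positivity
  have hDC : Tendsto (fun x => D x / C x) atTop (nhds 1) := by
    apply hGamma.congr'
    filter_upwards [eventually_gt_atTop 0] with x hx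
    rw [hD]
    simp only
    rw [hdenom x hx, div_div]
    congr 1
    ring
  have hDpos : ∀ᶠ x in atTop, 0 < D x := by
    have h1 : ∀ᶠ x in atTop, (0:ℝ) < D x / C x :=
      hDC.eventually_const_lt (by norm_num)
    filter_upwards [h1] with x hx
    have hC := hC_pos x
    have : D x = (D x / C x) * C x := by field_simp
    rw [this]
    exact mul_pos hx hC
  have hfpos : ∀ᶠ x in atTop, 0 < f x := by
    filter_upwards [hDpos, eventually_gt_atTop 0] with x hx h0
    rw [hfD x h0]
    have : (0:ℝ) < x ^ α * Real.exp (-β * x) := by positivity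
    exact mul_pos hx this
  have hDmeas : AEStronglyMeasurable D (volume : Measure ℝ) := by
    apply AEMeasurable.aestronglyMeasurable
    apply AEMeasurable.div hf_int.aemeasurable
    exact (Real.measurable_exp.comp ((Real.measurable_log.mul_const α).sub
      (measurable_const_mul β))).aemeasurable
  have hDsv : ∀ l : ℝ, 0 < l → Tendsto (fun t => D (t * l) / D t) atTop (nhds 1) := by
    intro l hl
    have heq : ∀ t : ℝ, D (t * l) / D t
        = (D (t * l) / C (t * l)) * (C (t * l) / C t) * (D t / C t)⁻¹ := by
      intro t
      rw [inv_div]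
      by_cases hDt : D t = 0
      · simp [hDt]
      · have hc1 : C (t * l) ≠ 0 := ne_of_gt (hC_pos _)
        have hc2 : C t ≠ 0 := ne_of_gt (hC_pos _)
        field_simp
    have h1 : Tendsto (fun t => D (t * l) / C (t * l)) atTop (nhds 1) :=
      hDC.comp (tendsto_id.atTop_mul_const hl)
    have h2 : Tendsto (fun t => C (t * l) / C t) atTop (nhds 1) := hC_SV l hl
    have h3 : Tendsto (fun t => (D t / C t)⁻¹) atTop (nhds 1) := by
      simpa using hDC.inv₀ one_ne_zero
    have := (h1.mul h2).mul h3
    rw [show (1:ℝ) * 1 * 1 = 1 by norm_num] at this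
    exact this.congr (fun t => (heq t).symm)
  have huct := uct D hDmeas hDpos hDsv
  set I : ℝ → ℝ := fun x => ∫ t in Set.Ioi x, f t with hI
  -- main ratio limit
  have hmain : Tendsto (fun x => β * I x / f x) atTop (nhds 1) := by
    rw [Metric.tendsto_nhds]
    intro δ hδ
    set ε : ℝ := min (δ/2) (1/2) with hε
    have hε0 : 0 < ε := lt_min (by linarith) (by norm_num)
    have hε2 : ε ≤ 1/2 := min_le_right _ _
    have hεδ : ε < δ := lt_of_le_of_lt (min_le_left _ _) (by linarith)
    have hkb := key_bounds f D α β ε hβ hε0 hε2 hf_int hf_nonneg hfD hDpos (huct ε hε0)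
    set m : ℝ := 2*ε + |α| with hm
    set m' : ℝ := 4*ε + |α| with hm'
    have hU : Tendsto (fun x : ℝ => β * ((1+ε) * (β - m/x)⁻¹)) atTop (nhds (1+ε)) := by
      have h0 : Tendsto (fun x : ℝ => m/x) atTop (nhds 0) := by
        simpa [div_eq_mul_inv] using tendsto_inv_atTop_zero.const_mul m
      have h1 : Tendsto (fun x : ℝ => β - m/x) atTop (nhds β) := by
        simpa using (tendsto_const_nhds (x := β)).sub h0
      have h2 := ((tendsto_const_nhds (x := (1+ε))).mul
        (h1.inv₀ (ne_of_gt hβ))).const_mul β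
      have : β * ((1+ε) * β⁻¹) = 1+ε := by field_simp
      rwa [this] at h2
    have hL : Tendsto (fun x : ℝ => β * ((1-ε) * (β + m'/x)⁻¹)) atTop (nhds (1-ε)) := by
      have h0 : Tendsto (fun x : ℝ => m'/x) atTop (nhds 0) := by
        simpa [div_eq_mul_inv] using tendsto_inv_atTop_zero.const_mul m'
      have h1 : Tendsto (fun x : ℝ => β + m'/x) atTop (nhds β) := by
        simpa using (tendsto_const_nhds (x := β)).add h0
      have h2 := ((tendsto_const_nhds (x := (1-ε))).mul
        (h1.inv₀ (ne_of_gt hβ))).const_mul β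
      have : β * ((1-ε) * β⁻¹) = 1-ε := by field_simp
      rwa [this] at h2
    have hUe : ∀ᶠ x : ℝ in atTop, β * ((1+ε) * (β - m/x)⁻¹) < 1 + δ :=
      hU.eventually_lt_const (by linarith)
    have hLe : ∀ᶠ x : ℝ in atTop, 1 - δ < β * ((1-ε) * (β + m'/x)⁻¹) :=
      hL.eventually_const_lt (by linarith)
    filter_upwards [hkb, hUe, hLe] with x hx hxU hxL
    obtain ⟨hfx, hlo, hhi⟩ := hx
    rw [Real.dist_eq, abs_lt]
    constructor
    · -- 1 - δ < β * I x / f x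
      have h1 : (1-ε) * (β + m'/x)⁻¹ * f x ≤ I x := hlo
      have h2 : β * ((1-ε) * (β + m'/x)⁻¹) ≤ β * I x / f x := by
        rw [le_div_iff₀ hfx]
        calc β * ((1-ε) * (β + m'/x)⁻¹) * f x
            = β * ((1-ε) * (β + m'/x)⁻¹ * f x) := by ring
          _ ≤ β * I x := mul_le_mul_of_nonneg_left h1 hβ.le
      linarith
    · -- β * I x / f x < 1 + δ
      have h2 : β * I x / f x ≤ β * ((1+ε) * (β - m/x)⁻¹) := by
        rw [div_le_iff₀ hfx]
        calc β * I x ≤ β * ((1+ε) * (β - m/x)⁻¹ * f x) :=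
              mul_le_mul_of_nonneg_left hhi hβ.le
          _ = β * ((1+ε) * (β - m/x)⁻¹) * f x := by ring
      linarith
  -- I x > 0 eventually
  have hIpos : ∀ᶠ x in atTop, 0 < I x := by
    have hkb := key_bounds f D α β (1/2) hβ (by norm_num) (by norm_num)
      hf_int hf_nonneg hfD hDpos (huct (1/2) (by norm_num))
    filter_upwards [hkb, eventually_gt_atTop 0] with x hx h0
    obtain ⟨hfx, hlo, _⟩ := hx
    have hfac : 0 < (1-(1:ℝ)/2) * (β + (4*(1/2)+|α|)/x)⁻¹ * f x := by
      have h1 : (0:ℝ) < 1-(1:ℝ)/2 := by norm_num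
      have h2 : (0:ℝ) < (β + (4*(1/2)+|α|)/x)⁻¹ := by
        apply inv_pos.mpr
        have : (0:ℝ) ≤ (4*(1/2)+|α|)/x := by positivity
        linarith
      exact mul_pos (mul_pos h1 h2) hfx
    linarith
  -- conclude
  have hfinal : Tendsto (fun x => β / (β * I x / f x)) atTop (nhds β) := by
    have := (tendsto_const_nhds (x := β) (f := atTop)).div hmain one_ne_zero
    simpa [Pi.div_def] using this
  apply hfinal.congr'
  filter_upwards [hfpos, hIpos] with x hfx hIx
  rw [eq_comm]
  have hf0 : f x ≠ 0 := ne_of_gt hfx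
  have hI0 : I x ≠ 0 := ne_of_gt hIx
  have hβ0 : β ≠ 0 := ne_of_gt hβ
  field_simp
  exact mul_inv_cancel₀ hI0
end
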